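/- arXiv:2412.09121 — 2 statements merged into one kernel-verified Lean document; each statement's English description precedes it below -/
import Mathlib

section
/- Let X and Z be metric spaces, let g : X → Z be a continuous function, let H_X and H_Z be real Hilbert spaces, and let φ_X : X → H_X and φ_Z : Z → H_Z be feature maps whose associated kernels K_X(x,x') = ⟨φ_X(x), φ_X(x')⟩ and K_Z(z,z') = ⟨φ_Z(z), φ_Z(z')⟩ are continuous and bounded. Assume the kernel K_X metrizes weak convergence of probability measures on X, in the sense that for any sequence of Borel probability measures (Q_N) and limit Q, mean-embedding convergence ‖μ_X[Q_N] − μ_X[Q]‖_{H_X} → 0 holds if and only if Q_N converges weakly to Q. Then for any sequence of Borel probability measures (P_N) on X and Borel probability measure P on X, if ‖μ_X[P_N] − μ_X[P]‖_{H_X} → 0 as N → ∞, then ‖μ_Z[g_*P_N] − μ_Z[g_*P]‖_{H_Z} → 0, where g_*P denotes the pushforward of P under g. -/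
open MeasureTheory Filter
open Topology BoundedContinuousFunction

section Auxiliary


lemma phi_cont {Z H : Type*} [MetricSpace Z] [NormedAddCommGroup H] [InnerProductSpace ℝ H]
    (φ : Z → H) (hK : Continuous fun p : Z × Z => (inner ℝ (φ p.1) (φ p.2) : ℝ)) :
    Continuous φ := by
  rw [continuous_iff_continuousAt]
  intro z
  rw [ContinuousAt, tendsto_iff_dist_tendsto_zero]
  have key : ∀ w, dist (φ w) (φ z)
      = Real.sqrt ((inner ℝ (φ w) (φ w) : ℝ) - 2 * (inner ℝ (φ w) (φ z) : ℝ)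
          + (inner ℝ (φ z) (φ z) : ℝ)) := by
    intro w
    rw [dist_eq_norm, ← Real.sqrt_sq (norm_nonneg (φ w - φ z)), norm_sub_sq_real,
      real_inner_self_eq_norm_sq, real_inner_self_eq_norm_sq]
  simp only [key]
  have t1 : Tendsto (fun w => (inner ℝ (φ w) (φ w) : ℝ)) (𝓝 z) (𝓝 (inner ℝ (φ z) (φ z) : ℝ)) :=
    (hK.comp (continuous_id.prodMk continuous_id)).tendsto z
  have t2 : Tendsto (fun w => (inner ℝ (φ w) (φ z) : ℝ)) (𝓝 z) (𝓝 (inner ℝ (φ z) (φ z) : ℝ)) :=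
    (hK.comp (continuous_id.prodMk continuous_const)).tendsto z
  have t3 : Tendsto (fun w => (inner ℝ (φ w) (φ w) : ℝ) - 2 * (inner ℝ (φ w) (φ z) : ℝ)
      + (inner ℝ (φ z) (φ z) : ℝ)) (𝓝 z) (𝓝 0) := by
    have := (t1.sub (t2.const_mul 2)).add (tendsto_const_nhds (x := (inner ℝ (φ z) (φ z) : ℝ)))
    convert this using 2
    ring
  have := (Real.continuous_sqrt.tendsto' 0 0 Real.sqrt_zero).comp t3
  exact this


lemma mmd_tendsto {Z H : Type*} [MetricSpace Z] [MeasurableSpace Z] [BorelSpace Z]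
    [NormedAddCommGroup H] [InnerProductSpace ℝ H] [CompleteSpace H]
    (φ : Z → H) (hφ : Continuous φ) (s : ℝ) (hs : 0 ≤ s) (hb : ∀ z, ‖φ z‖ ≤ s)
    (QN : ℕ → ProbabilityMeasure Z) (Q : ProbabilityMeasure Z)
    (hint : ∀ N, Integrable φ (QN N : Measure Z)) (hintQ : Integrable φ (Q : Measure Z))
    (hw : Tendsto QN atTop (𝓝 Q)) :
    Tendsto (fun N => ‖(∫ z, φ z ∂(QN N : Measure Z)) - ∫ z, φ z ∂(Q : Measure Z)‖)
      atTop (𝓝 0) := by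
  classical
  set μN : ℕ → H := fun N => ∫ z, φ z ∂(QN N : Measure Z) with hμN
  set m : H := ∫ z, φ z ∂(Q : Measure Z) with hm
  have normint : ∀ (ν : Measure Z) [IsProbabilityMeasure ν], Integrable φ ν →
      ‖∫ z, φ z ∂ν‖ ≤ s := by
    intro ν _ hi
    refine (norm_integral_le_integral_norm _).trans ?_
    calc ∫ z, ‖φ z‖ ∂ν ≤ ∫ _, s ∂ν :=
          integral_mono hi.norm (integrable_const _) hb
      _ = s := by simp
  have hμNb : ∀ N, ‖μN N‖ ≤ s := fun N => normint _ (hint N)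
  have hmb : ‖m‖ ≤ s := normint _ hintQ
  have hBCF := ProbabilityMeasure.tendsto_iff_forall_integral_tendsto.mp hw
  -- weak convergence of the embeddings
  have hfun : ∀ h : H, Tendsto (fun N => (inner ℝ h (μN N) : ℝ)) atTop (𝓝 (inner ℝ h m : ℝ)) := by
    intro h
    have hFcont : Continuous fun z => (inner ℝ h (φ z) : ℝ) := continuous_const.inner hφ
    have hFbdd : ∀ z, ‖(inner ℝ h (φ z) : ℝ)‖ ≤ ‖h‖ * s := by
      intro z
      rw [Real.norm_eq_abs]
      exact (abs_real_inner_le_norm h (φ z)).trans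
        (mul_le_mul_of_nonneg_left (hb z) (norm_nonneg h))
    have := hBCF (ofNormedAddCommGroup _ hFcont (‖h‖ * s) hFbdd)
    simp only [coe_ofNormedAddCommGroup] at this
    have e1 : ∀ N, (inner ℝ h (μN N) : ℝ) = ∫ z, (inner ℝ h (φ z) : ℝ) ∂(QN N : Measure Z) :=
      fun N => (integral_inner (hint N) h).symm
    have e2 : (inner ℝ h m : ℝ) = ∫ z, (inner ℝ h (φ z) : ℝ) ∂(Q : Measure Z) :=
      (integral_inner hintQ h).symm
    simp only [e1, e2]
    exact this
  set g : ℕ → Z → ℝ := fun N z => (inner ℝ (φ z) (μN N - m) : ℝ) with hg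
  have hvb : ∀ N, ‖μN N - m‖ ≤ 2 * s := fun N =>
    (norm_sub_le _ _).trans (by linarith [hμNb N, hmb])
  have gbound : ∀ N z, |g N z| ≤ s * (2 * s) := by
    intro N z
    exact (abs_real_inner_le_norm _ _).trans
      (mul_le_mul (hb z) (hvb N) (norm_nonneg _) hs)
  have glip : ∀ N z w, |g N z - g N w| ≤ ‖φ z - φ w‖ * (2 * s) := by
    intro N z w
    have : g N z - g N w = (inner ℝ (φ z - φ w) (μN N - m) : ℝ) := by
      rw [inner_sub_left]
    rw [this]
    exact (abs_real_inner_le_norm _ _).trans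
      (mul_le_mul_of_nonneg_left (hvb N) (norm_nonneg _))
  have gptw : ∀ z, Tendsto (fun N => g N z) atTop (𝓝 0) := by
    intro z
    have : ∀ N, g N z = (inner ℝ (φ z) (μN N) : ℝ) - (inner ℝ (φ z) m : ℝ) := by
      intro N; rw [hg]; simp [inner_sub_right]
    simp only [this]
    have := (hfun (φ z)).sub (tendsto_const_nhds (x := (inner ℝ (φ z) m : ℝ)))
    simpa using this
  -- the sup-envelope
  set u : ℕ → Z → ℝ := fun k z => ⨆ N : ℕ, |g (k + N) z| with hu
  have ubdd : ∀ k z, BddAbove (Set.range fun N : ℕ => |g (k + N) z|) := by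
    intro k z
    exact ⟨s * (2 * s), by rintro r ⟨N, rfl⟩; exact gbound _ _⟩
  have ule : ∀ k N z, k ≤ N → |g N z| ≤ u k z := by
    intro k N z hkN
    have : g N z = g (k + (N - k)) z := by rw [Nat.add_sub_cancel' hkN]
    rw [this]
    exact le_ciSup (ubdd k z) (N - k)
  have unonneg : ∀ k z, 0 ≤ u k z := fun k z =>
    (abs_nonneg _).trans (le_ciSup (ubdd k z) 0)
  have ubound : ∀ k z, u k z ≤ s * (2 * s) := fun k z =>
    ciSup_le fun N => gbound _ _
  have ulip : ∀ k z w, |u k z - u k w| ≤ ‖φ z - φ w‖ * (2 * s) := by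
    intro k z w
    rw [abs_sub_le_iff]
    constructor
    · rw [sub_le_iff_le_add]
      refine ciSup_le fun N => ?_
      calc |g (k + N) z| ≤ |g (k + N) w| + |g (k + N) z - g (k + N) w| := by
            have := abs_sub_abs_le_abs_sub (g (k + N) z) (g (k + N) w)
            linarith [abs_abs (g (k+N) z)]
        _ ≤ u k w + ‖φ z - φ w‖ * (2 * s) :=
            add_le_add (le_ciSup (ubdd k w) N) (glip _ _ _)
        _ = ‖φ z - φ w‖ * (2 * s) + u k w := by ring
    · rw [sub_le_iff_le_add]
      refine ciSup_le fun N => ?_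
      calc |g (k + N) w| ≤ |g (k + N) z| + |g (k + N) w - g (k + N) z| := by
            have := abs_sub_abs_le_abs_sub (g (k + N) w) (g (k + N) z)
            linarith [abs_abs (g (k+N) w)]
        _ ≤ u k z + ‖φ w - φ z‖ * (2 * s) :=
            add_le_add (le_ciSup (ubdd k z) N) (glip _ _ _)
        _ = ‖φ z - φ w‖ * (2 * s) + u k z := by rw [norm_sub_rev]; ring
  have ucont : ∀ k, Continuous (u k) := by
    intro k
    rw [continuous_iff_continuousAt]
    intro z
    rw [ContinuousAt, tendsto_iff_dist_tendsto_zero]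
    have hd : ∀ w, dist (u k w) (u k z) ≤ ‖φ w - φ z‖ * (2 * s) := by
      intro w; rw [Real.dist_eq]; exact ulip k w z
    have hn : Tendsto (fun w => ‖φ w - φ z‖ * (2 * s)) (𝓝 z) (𝓝 0) := by
      have : Tendsto (fun w => ‖φ w - φ z‖) (𝓝 z) (𝓝 0) := by
        have := (hφ.tendsto z).sub (tendsto_const_nhds (x := φ z))
        simpa using this.norm
      simpa using this.mul_const (2 * s)
    exact squeeze_zero (fun w => dist_nonneg) hd hn
  have uptw : ∀ z, Tendsto (fun k => u k z) atTop (𝓝 0) := by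
    intro z
    rw [Metric.tendsto_atTop]
    intro ε hε
    obtain ⟨K, hK⟩ := (Metric.tendsto_atTop.mp (gptw z)) (ε / 2) (by linarith)
    refine ⟨K, fun k hk => ?_⟩
    rw [Real.dist_eq, sub_zero, abs_of_nonneg (unonneg k z)]
    have : u k z ≤ ε / 2 := by
      refine ciSup_le fun N => ?_
      have := hK (k + N) (le_trans hk (Nat.le_add_right _ _))
      rw [Real.dist_eq, sub_zero] at this
      exact this.le
    linarith
  -- integrability of the auxiliary functions
  have gcont : ∀ N, Continuous (g N) := fun N => hφ.inner continuous_const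
  have gint : ∀ N M, Integrable (g N) (QN M : Measure Z) := by
    intro N M
    refine Integrable.mono' (integrable_const (s * (2 * s)))
      ((gcont N).aestronglyMeasurable) (Filter.Eventually.of_forall fun z => ?_)
    rw [Real.norm_eq_abs]; exact gbound N z
  have uint : ∀ k (ν : Measure Z) [IsProbabilityMeasure ν], Integrable (u k) ν := by
    intro k ν _
    refine Integrable.mono' (integrable_const (s * (2 * s)))
      ((ucont k).aestronglyMeasurable) (Filter.Eventually.of_forall fun z => ?_)
    rw [Real.norm_eq_abs, abs_of_nonneg (unonneg k z)]; exact ubound k z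
  -- convergence of ∫ u k along QN for fixed k
  have key1 : ∀ k, Tendsto (fun N => ∫ z, u k z ∂(QN N : Measure Z)) atTop
      (𝓝 (∫ z, u k z ∂(Q : Measure Z))) := by
    intro k
    have hUbdd : ∀ z, ‖u k z‖ ≤ s * (2 * s) := by
      intro z; rw [Real.norm_eq_abs, abs_of_nonneg (unonneg k z)]; exact ubound k z
    have := hBCF (ofNormedAddCommGroup (u k) (ucont k) (s * (2 * s)) hUbdd)
    simpa using this
  -- ∫ u k dQ → 0 as k → ∞
  have key2 : Tendsto (fun k => ∫ z, u k z ∂(Q : Measure Z)) atTop (𝓝 0) := by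
    have := tendsto_integral_of_dominated_convergence (μ := (Q : Measure Z))
      (F := fun k z => u k z) (f := fun _ => 0) (fun _ => s * (2 * s))
      (fun k => (ucont k).aestronglyMeasurable) (integrable_const _)
      (fun k => Filter.Eventually.of_forall fun z => by
        rw [Real.norm_eq_abs, abs_of_nonneg (unonneg k z)]; exact ubound k z)
      (Filter.Eventually.of_forall uptw)
    simpa using this
  -- the diagonal term goes to 0
  have key3 : Tendsto (fun N => ∫ z, g N z ∂(QN N : Measure Z)) atTop (𝓝 0) := by
    rw [Metric.tendsto_atTop]
    intro ε hε
    obtain ⟨K, hK⟩ := (Metric.tendsto_atTop.mp key2) (ε / 2) (by linarith)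
    have hKd := hK K le_rfl
    rw [Real.dist_eq, sub_zero] at hKd
    have hQK : ∫ z, u K z ∂(Q : Measure Z) < ε / 2 := (le_abs_self _).trans_lt hKd
    obtain ⟨N₁, hN₁⟩ := (Metric.tendsto_atTop.mp (key1 K)) (ε / 2) (by linarith)
    refine ⟨max K N₁, fun N hN => ?_⟩
    have hNK : K ≤ N := le_trans (le_max_left _ _) hN
    have hNN₁ : N₁ ≤ N := le_trans (le_max_right _ _) hN
    rw [Real.dist_eq, sub_zero]
    have h1 : |∫ z, g N z ∂(QN N : Measure Z)| ≤ ∫ z, |g N z| ∂(QN N : Measure Z) := by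
      simpa [Real.norm_eq_abs] using norm_integral_le_integral_norm (μ := (QN N : Measure Z)) (g N)
    have h2 : ∫ z, |g N z| ∂(QN N : Measure Z) ≤ ∫ z, u K z ∂(QN N : Measure Z) :=
      integral_mono (gint N N).abs (uint K _) (fun z => ule K N z hNK)
    have h3 := hN₁ N hNN₁
    rw [Real.dist_eq] at h3
    have h4 : ∫ z, u K z ∂(QN N : Measure Z) < ε := by
      have := abs_lt.mp h3
      linarith
    calc |∫ z, g N z ∂(QN N : Measure Z)| ≤ ∫ z, u K z ∂(QN N : Measure Z) := h1.trans h2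
      _ < ε := h4
  -- assemble
  have hAN : ∀ N, ∫ z, g N z ∂(QN N : Measure Z) = (inner ℝ (μN N - m) (μN N) : ℝ) := by
    intro N
    have : ∀ z, g N z = (inner ℝ (μN N - m) (φ z) : ℝ) := fun z => real_inner_comm _ _
    simp only [this]
    exact integral_inner (hint N) (μN N - m)
  have hBN : Tendsto (fun N => (inner ℝ (μN N - m) m : ℝ)) atTop (𝓝 0) := by
    have h1 : ∀ N, (inner ℝ (μN N - m) m : ℝ) = (inner ℝ m (μN N) : ℝ) - (inner ℝ m m : ℝ) := by
      intro N
      rw [inner_sub_left, real_inner_comm (μN N) m]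
    simp only [h1]
    have := (hfun m).sub (tendsto_const_nhds (x := (inner ℝ m m : ℝ)))
    simpa using this
  have hsq : Tendsto (fun N => (inner ℝ (μN N - m) (μN N - m) : ℝ)) atTop (𝓝 0) := by
    have h1 : ∀ N, (inner ℝ (μN N - m) (μN N - m) : ℝ)
        = (inner ℝ (μN N - m) (μN N) : ℝ) - (inner ℝ (μN N - m) m : ℝ) := by
      intro N; rw [inner_sub_right]
    simp only [h1, ← hAN]
    simpa using key3.sub hBN
  have : Tendsto (fun N => Real.sqrt (inner ℝ (μN N - m) (μN N - m) : ℝ)) atTop (𝓝 0) := by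
    have := (Real.continuous_sqrt.tendsto' 0 0 Real.sqrt_zero).comp hsq
    exact this
  refine this.congr fun N => ?_
  rw [real_inner_self_eq_norm_sq, Real.sqrt_sq (norm_nonneg _)]


section X
variable {X : Type*} [MetricSpace X] [MeasurableSpace X] [BorelSpace X]

/-- dirac as a probability measure -/
noncomputable def pDirac (a : X) : ProbabilityMeasure X :=
  ⟨Measure.dirac a, inferInstance⟩

@[simp] lemma pDirac_toMeasure (a : X) : (pDirac a : Measure X) = Measure.dirac a := rfl

lemma tendsto_of_dirac_tendsto {w : ℕ → X} {x : X}
    (hd : Tendsto (fun n => pDirac (w n)) atTop (𝓝 (pDirac x))) :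
    Tendsto w atTop (𝓝 x) := by
  have hcont : Continuous fun y : X => min (dist y x) 1 :=
    (continuous_id.dist continuous_const).min continuous_const
  have hbdd : ∀ y : X, ‖min (dist y x) 1‖ ≤ 1 := by
    intro y
    rw [Real.norm_eq_abs, abs_of_nonneg (le_min dist_nonneg zero_le_one)]
    exact min_le_right _ _
  have := (ProbabilityMeasure.tendsto_iff_forall_integral_tendsto.mp hd)
    (ofNormedAddCommGroup _ hcont 1 hbdd)
  simp only [coe_ofNormedAddCommGroup, pDirac_toMeasure, integral_dirac] at this
  simp only [dist_self, min_eq_left (zero_le_one (α := ℝ))] at this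
  rw [tendsto_iff_dist_tendsto_zero]
  rw [Metric.tendsto_atTop] at this ⊢
  intro ε hε
  obtain ⟨K, hK⟩ := this (min ε 1) (lt_min hε one_pos)
  refine ⟨K, fun n hn => ?_⟩
  have h1 := hK n hn
  rw [Real.dist_eq, sub_zero, abs_of_nonneg (le_min dist_nonneg zero_le_one)] at h1
  rw [Real.dist_eq, sub_zero, abs_of_nonneg dist_nonneg]
  by_contra hcon
  push_neg at hcon
  have : min ε 1 ≤ min (dist (w n) x) 1 := min_le_min hcon le_rfl
  exact absurd h1 (not_lt.mpr this)
end X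

section HX
variable {X : Type*} [MetricSpace X] [MeasurableSpace X] [BorelSpace X]
variable {HX : Type*} [NormedAddCommGroup HX] [InnerProductSpace ℝ HX] [CompleteSpace HX]

lemma goodX (φX : X → HX)
    (hmetrize : ∀ (QN : ℕ → ProbabilityMeasure X) (Q : ProbabilityMeasure X),
      Tendsto (fun N => ‖(∫ x, φX x ∂(QN N : Measure X)) - ∫ x, φX x ∂(Q : Measure X)‖)
          atTop (nhds 0) ↔ Tendsto QN atTop (nhds Q)) :
    ∀ Q : ProbabilityMeasure X, AEStronglyMeasurable φX (Q : Measure X) := by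
  by_contra hbad
  push_neg at hbad
  obtain ⟨Q, hQ⟩ := hbad
  rcases subsingleton_or_nontrivial X with hsub | hnt
  · exact hQ (StronglyMeasurable.of_subsingleton_dom (f := φX)).aestronglyMeasurable
  have hzero : ∀ a : X, φX a = 0 := by
    intro a
    set θ : ℕ → ENNReal := fun N => ((N + 1 : ℕ) : ENNReal)⁻¹ with hθ
    have hθle : ∀ N, θ N ≤ 1 := by
      intro N
      rw [hθ]
      simp only []
      rw [ENNReal.inv_le_one]
      exact_mod_cast Nat.one_le_iff_ne_zero.mpr (Nat.succ_ne_zero N)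
    have hθne : ∀ N, θ N ≠ 0 := fun N => ENNReal.inv_ne_zero.mpr (by simp)
    set M : ℕ → Measure X := fun N => (1 - θ N) • Measure.dirac a + θ N • (Q : Measure X)
      with hM
    have hMprob : ∀ N, IsProbabilityMeasure (M N) := by
      intro N
      constructor
      simp only [hM, Measure.add_apply, Measure.smul_apply, smul_eq_mul, measure_univ,
        mul_one]
      exact tsub_add_cancel_of_le (hθle N)
    have habs : ∀ N, (Q : Measure X) ≪ M N := by
      intro N
      refine Measure.AbsolutelyContinuous.mk fun s hs h0 => ?_
      have hle : (θ N • (Q : Measure X)) s ≤ M N s := by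
        rw [hM]
        exact Measure.le_iff'.mp (Measure.le_add_left le_rfl) s
      rw [h0] at hle
      have : θ N * (Q : Measure X) s = 0 := le_antisymm (by simpa using hle) zero_le
      rcases mul_eq_zero.mp this with h | h
      · exact absurd h (hθne N)
      · exact h
    have hnint : ∀ N, ¬ Integrable φX (M N) := fun N hi =>
      hQ (hi.aestronglyMeasurable.mono_ac (habs N))
    have hMint : ∀ N, ∫ x, φX x ∂(M N) = 0 := fun N => integral_undef (hnint N)
    set QM : ℕ → ProbabilityMeasure X := fun N => ⟨M N, hMprob N⟩ with hQM
    have hconv : Tendsto QM atTop (𝓝 (pDirac a)) := by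
      rw [ProbabilityMeasure.tendsto_iff_forall_integral_tendsto]
      intro f
      have key : ∀ N, ∫ ω, f ω ∂(QM N : Measure X)
          = (1 - θ N).toReal * f a + (θ N).toReal * ∫ ω, f ω ∂(Q : Measure X) := by
        intro N
        haveI h1 : IsFiniteMeasure ((1 - θ N) • Measure.dirac a) := by
          constructor
          simp only [Measure.smul_apply, smul_eq_mul, measure_univ, mul_one]
          exact lt_of_le_of_lt tsub_le_self ENNReal.one_lt_top
        haveI h2 : IsFiniteMeasure (θ N • (Q : Measure X)) := by
          constructor
          simp only [Measure.smul_apply, smul_eq_mul, measure_univ, mul_one]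
          exact lt_of_le_of_lt (hθle N) ENNReal.one_lt_top
        show ∫ ω, f ω ∂(M N) = _
        rw [hM]
        simp only []
        rw [integral_add_measure (f.integrable _) (f.integrable _),
          integral_smul_measure, integral_smul_measure, integral_dirac]
        simp [smul_eq_mul]
      simp only [key]
      have hto : Tendsto (fun N => (θ N).toReal) atTop (𝓝 0) := by
        have : ∀ N : ℕ, (θ N).toReal = 1 / ((N : ℝ) + 1) := by
          intro N
          rw [hθ]
          simp only []
          rw [ENNReal.toReal_inv, ENNReal.toReal_natCast]
          push_cast
          rw [one_div]
        simp only [this]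
        exact tendsto_one_div_add_atTop_nhds_zero_nat
      have hto1 : Tendsto (fun N => (1 - θ N).toReal) atTop (𝓝 1) := by
        have : ∀ N, (1 - θ N).toReal = 1 - (θ N).toReal := by
          intro N
          rw [ENNReal.toReal_sub_of_le (hθle N) ENNReal.one_ne_top]
          simp
        simp only [this]
        have := (tendsto_const_nhds (x := (1:ℝ))).sub hto
        simpa using this
      have := (hto1.mul_const (f a)).add (hto.mul_const (∫ ω, f ω ∂(Q : Measure X)))
      simp only [one_mul, zero_mul, add_zero] at this
      simpa [pDirac, integral_dirac] using this
    have := (hmetrize QM (pDirac a)).mpr hconv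
    have hsimp : (fun N => ‖(∫ x, φX x ∂(QM N : Measure X)) - ∫ x, φX x ∂(pDirac a : Measure X)‖)
        = fun _ => ‖φX a‖ := by
      funext N
      show ‖(∫ x, φX x ∂(M N)) - ∫ x, φX x ∂(Measure.dirac a)‖ = _
      rw [hMint, integral_dirac, zero_sub, norm_neg]
    rw [hsimp] at this
    have := tendsto_nhds_unique tendsto_const_nhds this
    exact norm_eq_zero.mp this
  obtain ⟨a, b, hab⟩ := exists_pair_ne X
  have hdconv : Tendsto (fun _ : ℕ => pDirac a) atTop (𝓝 (pDirac b)) := by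
    refine (hmetrize _ _).mp ?_
    have : (fun _ : ℕ => ‖(∫ x, φX x ∂(pDirac a : Measure X))
        - ∫ x, φX x ∂(pDirac b : Measure X)‖) = fun _ => 0 := by
      funext N
      simp only [pDirac_toMeasure, integral_dirac, hzero, sub_zero, norm_zero]
    rw [this]
    exact tendsto_const_nhds
  exact hab (tendsto_nhds_unique tendsto_const_nhds (tendsto_of_dirac_tendsto hdconv))


lemma phiX_inv_seq_cont (φX : X → HX)
    (hmetrize : ∀ (QN : ℕ → ProbabilityMeasure X) (Q : ProbabilityMeasure X),
      Tendsto (fun N => ‖(∫ x, φX x ∂(QN N : Measure X)) - ∫ x, φX x ∂(Q : Measure X)‖)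
          atTop (nhds 0) ↔ Tendsto QN atTop (nhds Q)) :
    ∀ (w : ℕ → X) (x : X),
      Tendsto (fun n => ‖φX (w n) - φX x‖) atTop (𝓝 0) → Tendsto w atTop (𝓝 x) := by
  intro w x hc
  refine tendsto_of_dirac_tendsto ((hmetrize (fun n => pDirac (w n)) (pDirac x)).mp ?_)
  simpa only [pDirac_toMeasure, integral_dirac] using hc

lemma sepSupp (φX : X → HX)
    (hmetrize : ∀ (QN : ℕ → ProbabilityMeasure X) (Q : ProbabilityMeasure X),
      Tendsto (fun N => ‖(∫ x, φX x ∂(QN N : Measure X)) - ∫ x, φX x ∂(Q : Measure X)‖)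
          atTop (nhds 0) ↔ Tendsto QN atTop (nhds Q)) :
    ∀ Q : ProbabilityMeasure X, ∃ S : Set X,
      TopologicalSpace.IsSeparable S ∧ ∀ᵐ x ∂(Q : Measure X), x ∈ S := by
  classical
  intro Q
  have hseq := phiX_inv_seq_cont φX hmetrize
  obtain ⟨f₀, hf₀sm, hae⟩ := goodX φX hmetrize Q
  set T : Set HX := Set.range f₀ with hT
  have hTsep : TopologicalSpace.IsSeparable T := hf₀sm.isSeparable_range
  set S : Set X := {x | φX x ∈ T} with hS
  refine ⟨S, ?_, ?_⟩
  · rcases S.eq_empty_or_nonempty with hemp | ⟨x₀, hx₀⟩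
    · rw [hemp]
      exact Set.countable_empty.isSeparable
    obtain ⟨c, hc_count, hTc⟩ := hTsep
    set pick : HX → ℕ → X := fun y k =>
      if h : ∃ x, x ∈ S ∧ dist (φX x) y < 1 / (k + 1) then h.choose else x₀ with hpick
    refine ⟨Set.image2 pick c Set.univ, hc_count.image2 Set.countable_univ _, ?_⟩
    intro x hx
    have hxT : φX x ∈ closure c := hTc hx
    have hyex : ∀ k : ℕ, ∃ y ∈ c, dist (φX x) y < 1 / (k + 1) := by
      intro k
      exact Metric.mem_closure_iff.mp hxT _ (by positivity)
    choose y hyc hyd using hyex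
    have hEx : ∀ k : ℕ, ∃ x', x' ∈ S ∧ dist (φX x') (y k) < 1 / (k + 1) :=
      fun k => ⟨x, hx, hyd k⟩
    set w : ℕ → X := fun k => pick (y k) k with hw
    have hwspec : ∀ k, w k ∈ S ∧ dist (φX (w k)) (y k) < 1 / (k + 1) := by
      intro k
      rw [hw, hpick]
      simp only []
      rw [dif_pos (hEx k)]
      exact (hEx k).choose_spec
    have hwD : ∀ k, w k ∈ Set.image2 pick c Set.univ := fun k =>
      Set.mem_image2_of_mem (hyc k) (Set.mem_univ k)
    have hwx : Tendsto w atTop (𝓝 x) := by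
      refine hseq w x ?_
      have hb : ∀ k : ℕ, ‖φX (w k) - φX x‖ ≤ 2 / (k + 1) := by
        intro k
        rw [← dist_eq_norm]
        calc dist (φX (w k)) (φX x) ≤ dist (φX (w k)) (y k) + dist (y k) (φX x) :=
              dist_triangle _ _ _
          _ ≤ 1 / (k + 1) + 1 / (k + 1) := by
              have h2 := hyd k
              rw [dist_comm] at h2
              exact add_le_add (hwspec k).2.le h2.le
          _ = 2 / (k + 1) := by ring
      have hlim : Tendsto (fun k : ℕ => 2 / ((k : ℝ) + 1)) atTop (𝓝 0) := by
        have := tendsto_one_div_add_atTop_nhds_zero_nat.const_mul (2 : ℝ)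
        simpa [div_eq_mul_inv, one_div, mul_comm] using this
      exact squeeze_zero (fun k => norm_nonneg _) hb hlim
    exact mem_closure_of_tendsto hwx (Filter.Eventually.of_forall hwD)
  · filter_upwards [hae] with x hx
    rw [hS]
    exact ⟨x, hx.symm⟩

end HX



end Auxiliary

/-- Consistency of RKHS embeddings of functions of random variables (Theorem 1 of the
paper, after Simon-Gabriel and Schölkopf): let `g : X → Z` be continuous, let
`φX : X → HX` and `φZ : Z → HZ` be feature maps whose kernels are continuous and
bounded, and suppose the kernel on `X` metrizes weak convergence of probability
measures (embedding convergence is equivalent to weak convergence). Then convergence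
of mean embeddings `μX[P_N] → μX[P]` implies convergence of the mean embeddings of the
pushforwards `μZ[g_*P_N] → μZ[g_*P]`. -/
theorem embedding_convergence_of_pushforward
    {X Z : Type*} [MetricSpace X] [MeasurableSpace X] [BorelSpace X]
    [MetricSpace Z] [MeasurableSpace Z] [BorelSpace Z]
    {HX HZ : Type*} [NormedAddCommGroup HX] [InnerProductSpace ℝ HX] [CompleteSpace HX]
    [NormedAddCommGroup HZ] [InnerProductSpace ℝ HZ] [CompleteSpace HZ]
    (g : X → Z) (hg : Continuous g)
    (φX : X → HX) (φZ : Z → HZ)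
    (hKXcont : Continuous fun p : X × X => (inner ℝ (φX p.1) (φX p.2) : ℝ))
    (hKZcont : Continuous fun p : Z × Z => (inner ℝ (φZ p.1) (φZ p.2) : ℝ))
    (cX cZ : ℝ)
    (hKXbdd : ∀ x x' : X, |(inner ℝ (φX x) (φX x') : ℝ)| ≤ cX)
    (hKZbdd : ∀ z z' : Z, |(inner ℝ (φZ z) (φZ z') : ℝ)| ≤ cZ)
    (hmetrize : ∀ (QN : ℕ → ProbabilityMeasure X) (Q : ProbabilityMeasure X),
      Tendsto (fun N => ‖(∫ x, φX x ∂(QN N : Measure X)) - ∫ x, φX x ∂(Q : Measure X)‖)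
          atTop (nhds 0)
        ↔ Tendsto QN atTop (nhds Q))
    (PN : ℕ → ProbabilityMeasure X) (P : ProbabilityMeasure X)
    (h : Tendsto (fun N => ‖(∫ x, φX x ∂(PN N : Measure X)) - ∫ x, φX x ∂(P : Measure X)‖)
      atTop (nhds 0)) :
    Tendsto (fun N => ‖(∫ z, φZ z ∂((PN N : Measure X).map g))
        - ∫ z, φZ z ∂((P : Measure X).map g)‖) atTop (nhds 0) := by
  classical
  have hφZ : Continuous φZ := phi_cont φZ hKZcont
  have hbZ : ∀ z, ‖φZ z‖ ≤ Real.sqrt cZ := by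
    intro z
    rw [← Real.sqrt_sq (norm_nonneg (φZ z))]
    apply Real.sqrt_le_sqrt
    rw [← real_inner_self_eq_norm_sq]
    exact le_of_abs_le (hKZbdd z z)
  have hintZ : ∀ Q : ProbabilityMeasure X, Integrable φZ ((Q : Measure X).map g) := by
    intro Q
    letI : MeasurableSpace HZ := borel HZ
    haveI : BorelSpace HZ := ⟨rfl⟩
    obtain ⟨S, hSsep, hSae⟩ := sepSupp φX hmetrize Q
    haveI : IsProbabilityMeasure ((Q : Measure X).map g) :=
      Measure.isProbabilityMeasure_map hg.measurable.aemeasurable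
    set t : Set HZ := closure (φZ '' (g '' S)) with ht
    have htsep : TopologicalSpace.IsSeparable t := ((hSsep.image hg).image hφZ).closure
    have hA : MeasurableSet (φZ ⁻¹' t) := hφZ.measurable isClosed_closure.measurableSet
    have haes : AEStronglyMeasurable φZ ((Q : Measure X).map g) := by
      rw [aestronglyMeasurable_iff_aemeasurable_separable]
      refine ⟨hφZ.measurable.aemeasurable, t, htsep, ?_⟩
      rw [MeasureTheory.ae_map_iff hg.measurable.aemeasurable hA]
      filter_upwards [hSae] with x hx
      exact subset_closure (Set.mem_image_of_mem φZ (Set.mem_image_of_mem g hx))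
    exact Integrable.mono' (integrable_const (Real.sqrt cZ)) haes
      (Filter.Eventually.of_forall fun z => hbZ z)
  have lim : Tendsto PN atTop (𝓝 P) := (hmetrize PN P).mp h
  have hwZ := ProbabilityMeasure.tendsto_map_of_tendsto_of_continuous PN P lim hg
  have := mmd_tendsto φZ hφZ (Real.sqrt cZ) (Real.sqrt_nonneg _) hbZ
      (fun N => (PN N).map hg.measurable.aemeasurable) (P.map hg.measurable.aemeasurable)
      (fun N => by
        simpa only [ProbabilityMeasure.toMeasure_map] using hintZ (PN N))
      (by simpa only [ProbabilityMeasure.toMeasure_map] using hintZ P) hwZ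
  simpa only [ProbabilityMeasure.toMeasure_map] using this
end

section
/- Let X be a measurable space, H a real Hilbert space, and φ : X → H a measurable feature map with kernel K(x,y) = ⟨φ(x), φ(y)⟩_H satisfying 0 ≤ K(x,y) ≤ c₀ for all x, y and some constant c₀ > 0. Let P and Q be probability measures on X, let x₁,…,x_N be i.i.d. samples from P and y₁,…,y_N be i.i.d. samples from Q, independent of each other. Define the empirical MMD as MMD_emp = ‖(1/N)∑_{j=1}^N φ(x_j) − (1/N)∑_{j=1}^N φ(y_j)‖_H and the population MMD as MMD = ‖μ[P] − μ[Q]‖_H where μ[P] = ∫ φ dP. Then for every ε > 0, with probability greater than 1 − exp(−ε²N/(4c₀)) over the draw of the two samples, |MMD_emp − MMD| ≤ 2(2√(c₀/N) + ε). -/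
open MeasureTheory ProbabilityTheory

set_option linter.unusedSectionVars false
set_option maxHeartbeats 1000000

section mmd_aux

variable {X : Type*} [MeasurableSpace X]
variable {H : Type*} [NormedAddCommGroup H] [InnerProductSpace ℝ H] [CompleteSpace H]

lemma mmd_aux_sum_norm_le (ξ : X → H) (b : ℝ) (hbd : ∀ x, ‖ξ x‖ ≤ b) {m : ℕ} (w : Fin m → X) :
    ‖∑ j, ξ (w j)‖ ≤ m * b := by
  calc ‖∑ j, ξ (w j)‖ ≤ ∑ j, ‖ξ (w j)‖ := norm_sum_le _ _
    _ ≤ ∑ _j : Fin m, b := Finset.sum_le_sum fun j _ => hbd _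
    _ = m * b := by simp [Finset.sum_const, Finset.card_univ, nsmul_eq_mul]

lemma mmd_aux_S_meas (ξ : X → H) (hξ : StronglyMeasurable ξ) (m : ℕ) :
    StronglyMeasurable (fun w : Fin m → X => ∑ j, ξ (w j)) :=
  Finset.stronglyMeasurable_fun_sum _ fun j _ => hξ.comp_measurable (measurable_pi_apply j)

lemma mmd_aux_exp_meas {Z : Type*} [MeasurableSpace Z] (F : Z → H)
    (hF : StronglyMeasurable F) (κ : ℝ) :
    StronglyMeasurable (fun z => Real.exp (κ * ‖F z‖ ^ 2)) :=
  Real.continuous_exp.comp_stronglyMeasurable ((hF.norm.pow 2).const_mul κ)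

/-- Hoeffding-type MGF bound for a bounded, centered real random variable. -/
lemma mmd_aux_hoeffding (P : Measure X) [IsProbabilityMeasure P] (Y : X → ℝ)
    (hY : AEStronglyMeasurable Y P) (c t : ℝ) (hc0 : 0 ≤ c) (hc : ∀ x, |Y x| ≤ c)
    (h0 : ∫ x, Y x ∂P = 0) :
    ∫ x, Real.exp (t * Y x) ∂P ≤ Real.exp (t ^ 2 * c ^ 2 / 2) := by
  rcases eq_or_lt_of_le hc0 with hc0' | hc0'
  · have hY0 : ∀ x, Y x = 0 := fun x => abs_eq_zero.mp (le_antisymm (hc0' ▸ hc x) (abs_nonneg _))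
    simp only [hY0, mul_zero, Real.exp_zero]
    simp [Real.one_le_exp_iff]
    positivity
  · have hint : Integrable (fun x => Real.exp (t * Y x)) P := by
      refine (integrable_const (Real.exp (|t| * c))).mono'
        (Real.continuous_exp.comp_aestronglyMeasurable (hY.const_mul t)) (ae_of_all _ fun x => ?_)
      rw [Real.norm_eq_abs, Real.abs_exp]
      refine Real.exp_le_exp.mpr ?_
      calc t * Y x ≤ |t * Y x| := le_abs_self _
        _ = |t| * |Y x| := abs_mul _ _
        _ ≤ |t| * c := by
            exact mul_le_mul_of_nonneg_left (hc x) (abs_nonneg t)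
    have hYint : Integrable Y P := by
      refine (integrable_const c).mono' hY (ae_of_all _ fun x => ?_)
      simpa using hc x
    have hpt : ∀ x, Real.exp (t * Y x) ≤
        Real.cosh (t * c) + Y x * (Real.sinh (t * c) / c) := by
      intro x
      have hYl : -c ≤ Y x := (abs_le.mp (hc x)).1
      have hYu : Y x ≤ c := (abs_le.mp (hc x)).2
      have ha : (0:ℝ) ≤ (c - Y x) / (2 * c) := by
        have h1 : 0 ≤ c - Y x := by linarith
        positivity
      have hb : (0:ℝ) ≤ (c + Y x) / (2 * c) := by
        have h1 : 0 ≤ c + Y x := by linarith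
        positivity
      have hab : (c - Y x) / (2 * c) + (c + Y x) / (2 * c) = 1 := by
        field_simp
        ring
      have hcv := convexOn_exp.2 (Set.mem_univ (-(t * c))) (Set.mem_univ (t * c)) ha hb hab
      simp only [smul_eq_mul] at hcv
      have harg : (c - Y x) / (2 * c) * (-(t * c)) + (c + Y x) / (2 * c) * (t * c) = t * Y x := by
        rw [div_mul_eq_mul_div, div_mul_eq_mul_div, ← add_div,
          div_eq_iff (by positivity : (2:ℝ) * c ≠ 0)]
        ring
      rw [harg] at hcv
      refine hcv.trans (le_of_eq ?_)
      rw [Real.cosh_eq, Real.sinh_eq]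
      field_simp
      ring
    calc ∫ x, Real.exp (t * Y x) ∂P
        ≤ ∫ x, (Real.cosh (t * c) + Y x * (Real.sinh (t * c) / c)) ∂P := by
          refine integral_mono hint ?_ hpt
          exact (integrable_const _).add (hYint.mul_const _)
      _ = Real.cosh (t * c) := by
          rw [integral_add (integrable_const _) (hYint.mul_const _), integral_const,
            integral_mul_const, h0]
          simp
      _ ≤ Real.exp ((t * c) ^ 2 / 2) := Real.cosh_le_exp_half_sq _
      _ = Real.exp (t ^ 2 * c ^ 2 / 2) := by rw [mul_pow]

/-- Peel off the first coordinate of an integral over a finite product of copies of `P`. -/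
lemma mmd_aux_fubini (P : Measure X) [IsProbabilityMeasure P] {n : ℕ}
    (f : (Fin (n + 1) → X) → ℝ) (g : X → (Fin n → X) → ℝ)
    (hfg : ∀ x w, f (Fin.cons x w) = g x w)
    (hint : Integrable (fun p : X × (Fin n → X) => g p.1 p.2)
      (P.prod (Measure.pi fun _ : Fin n => P))) :
    ∫ z, f z ∂(Measure.pi fun _ : Fin (n + 1) => P)
      = ∫ w, ∫ x, g x w ∂P ∂(Measure.pi fun _ : Fin n => P) := by
  have MP := measurePreserving_piFinSuccAbove (fun _ : Fin (n + 1) => P) 0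
  set e := MeasurableEquiv.piFinSuccAbove (fun _ : Fin (n + 1) => X) 0 with he
  have hsymm : ∀ p : X × (Fin n → X), f (e.symm p) = g p.1 p.2 := by
    rintro ⟨a, w⟩
    have : e.symm (a, w) = Fin.cons a w := by
      simp [he, MeasurableEquiv.piFinSuccAbove]
      rfl
    rw [this, hfg]
  have h1 : ∫ z, f z ∂(Measure.pi fun _ : Fin (n + 1) => P)
      = ∫ p, f (e.symm p) ∂(P.prod (Measure.pi fun _ : Fin n => P)) := by
    rw [← MP.integral_comp e.measurableEmbedding (fun p => f (e.symm p))]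
    simp
  rw [h1]
  have h2 : ∫ p, f (e.symm p) ∂(P.prod (Measure.pi fun _ : Fin n => P))
      = ∫ p : X × (Fin n → X), g p.1 p.2 ∂(P.prod (Measure.pi fun _ : Fin n => P)) := by
    exact integral_congr_ae (ae_of_all _ fun p => hsymm p)
  rw [h2, integral_prod_symm _ hint]

/-- The key sub-Gaussian MGF bound for sums of iid bounded centered Hilbert-valued
random variables. -/
lemma mmd_aux_mgf (P : Measure X) [IsProbabilityMeasure P] (ξ : X → H)
    (hξ : StronglyMeasurable ξ) (b : ℝ) (hb : 0 ≤ b) (hbd : ∀ x, ‖ξ x‖ ≤ b)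
    (h0 : ∫ x, ξ x ∂P = 0) :
    ∀ (n : ℕ) (κ : ℝ), 0 ≤ κ → 2 * κ * b ^ 2 * n < 1 →
      (∫ z, Real.exp (κ * ‖∑ j, ξ (z j)‖ ^ 2) ∂(Measure.pi fun _ : Fin n => P)) ^ 2
        * (1 - 2 * κ * b ^ 2 * n) ≤ 1 := by
  have hξint : Integrable ξ P :=
    (integrable_const b).mono' hξ.aestronglyMeasurable (ae_of_all _ fun x => hbd x)
  intro n
  induction n with
  | zero =>
      intro κ hκ hcond
      simp
  | succ n IH =>
      intro κ hκ hcond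
      set pn := (Measure.pi fun _ : Fin n => P) with hpn
      push_cast at hcond
      set a := 2 * κ * b ^ 2 with haa
      have ha : 0 ≤ a := by positivity
      have hn1 : a * ((n : ℝ) + 1) < 1 := hcond
      have hnn : (0:ℝ) ≤ (n : ℝ) := Nat.cast_nonneg n
      set κ' := κ + 2 * κ ^ 2 * b ^ 2 with hκ'
      have hκ'0 : 0 ≤ κ' := by positivity
      have hκ'b : 2 * κ' * b ^ 2 = a + a ^ 2 := by rw [haa, hκ']; ring
      have hcond' : 2 * κ' * b ^ 2 * n < 1 := by
        rw [hκ'b]; nlinarith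
      have IH' := IH κ' hκ'0 hcond'
      -- the one-step inner bound
      have hinner : ∀ s : H, ∫ x, Real.exp (κ * ‖ξ x + s‖ ^ 2) ∂P
          ≤ Real.exp (κ * b ^ 2) * Real.exp (κ' * ‖s‖ ^ 2) := by
        intro s
        have hY : ∀ x, |(inner ℝ s (ξ x) : ℝ)| ≤ b * ‖s‖ := fun x => by
          calc |(inner ℝ s (ξ x) : ℝ)| ≤ ‖s‖ * ‖ξ x‖ := abs_real_inner_le_norm _ _
            _ ≤ ‖s‖ * b := mul_le_mul_of_nonneg_left (hbd x) (norm_nonneg s)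
            _ = b * ‖s‖ := mul_comm _ _
        have hY0 : ∫ x, (inner ℝ s (ξ x) : ℝ) ∂P = 0 := by
          rw [integral_inner hξint s, h0, inner_zero_right]
        have hYmeas : StronglyMeasurable (fun x => (inner ℝ s (ξ x) : ℝ)) :=
          stronglyMeasurable_const.inner hξ
        have hH := mmd_aux_hoeffding P _ hYmeas.aestronglyMeasurable (b * ‖s‖) (2 * κ)
          (by positivity) hY hY0
        have hpt : ∀ x, Real.exp (κ * ‖ξ x + s‖ ^ 2)
            ≤ Real.exp (κ * b ^ 2 + κ * ‖s‖ ^ 2) * Real.exp ((2 * κ) * (inner ℝ s (ξ x) : ℝ)) := by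
          intro x
          rw [← Real.exp_add]
          refine Real.exp_le_exp.mpr ?_
          have hexp : ‖ξ x + s‖ ^ 2 = ‖ξ x‖ ^ 2 + 2 * (inner ℝ (ξ x) s : ℝ) + ‖s‖ ^ 2 :=
            norm_add_sq_real _ _
          have h1 : ‖ξ x‖ ^ 2 ≤ b ^ 2 := by nlinarith [norm_nonneg (ξ x), hbd x]
          have h2 : (inner ℝ (ξ x) s : ℝ) = (inner ℝ s (ξ x) : ℝ) := real_inner_comm _ _
          rw [hexp, h2]
          nlinarith [mul_le_mul_of_nonneg_left h1 hκ]
        have hmeas1 : StronglyMeasurable (fun x => Real.exp (κ * ‖ξ x + s‖ ^ 2)) :=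
          mmd_aux_exp_meas (fun x => ξ x + s) (hξ.add_const s) κ
        have hint1 : Integrable (fun x => Real.exp (κ * ‖ξ x + s‖ ^ 2)) P := by
          refine (integrable_const (Real.exp (κ * (b + ‖s‖) ^ 2))).mono'
            hmeas1.aestronglyMeasurable (ae_of_all _ fun x => ?_)
          rw [Real.norm_eq_abs, Real.abs_exp]
          refine Real.exp_le_exp.mpr (mul_le_mul_of_nonneg_left ?_ hκ)
          have h3 : ‖ξ x + s‖ ≤ b + ‖s‖ :=
            (norm_add_le _ _).trans (add_le_add_left (hbd x) _)
          nlinarith [norm_nonneg (ξ x + s)]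
        have hint2 : Integrable
            (fun x => Real.exp ((2 * κ) * (inner ℝ s (ξ x) : ℝ))) P := by
          refine (integrable_const (Real.exp (|2 * κ| * (b * ‖s‖)))).mono'
            (Real.continuous_exp.comp_stronglyMeasurable
              (hYmeas.const_mul _)).aestronglyMeasurable (ae_of_all _ fun x => ?_)
          rw [Real.norm_eq_abs, Real.abs_exp]
          refine Real.exp_le_exp.mpr ?_
          calc (2 * κ) * (inner ℝ s (ξ x) : ℝ) ≤ |(2 * κ) * (inner ℝ s (ξ x) : ℝ)| := le_abs_self _
            _ = |2 * κ| * |(inner ℝ s (ξ x) : ℝ)| := abs_mul _ _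
            _ ≤ |2 * κ| * (b * ‖s‖) := mul_le_mul_of_nonneg_left (hY x) (abs_nonneg _)
        calc ∫ x, Real.exp (κ * ‖ξ x + s‖ ^ 2) ∂P
            ≤ ∫ x, Real.exp (κ * b ^ 2 + κ * ‖s‖ ^ 2)
                * Real.exp ((2 * κ) * (inner ℝ s (ξ x) : ℝ)) ∂P :=
              integral_mono hint1 (hint2.const_mul _) hpt
          _ = Real.exp (κ * b ^ 2 + κ * ‖s‖ ^ 2)
                * ∫ x, Real.exp ((2 * κ) * (inner ℝ s (ξ x) : ℝ)) ∂P := integral_const_mul _ _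
          _ ≤ Real.exp (κ * b ^ 2 + κ * ‖s‖ ^ 2)
                * Real.exp ((2 * κ) ^ 2 * (b * ‖s‖) ^ 2 / 2) := by
              exact mul_le_mul_of_nonneg_left hH (Real.exp_pos _).le
          _ = Real.exp (κ * b ^ 2) * Real.exp (κ' * ‖s‖ ^ 2) := by
              rw [← Real.exp_add, ← Real.exp_add]
              congr 1
              rw [hκ']
              ring
      -- Fubini step
      have hfg : ∀ (x : X) (w : Fin n → X),
          (fun z : Fin (n+1) → X => Real.exp (κ * ‖∑ j, ξ (z j)‖ ^ 2)) (Fin.cons x w)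
            = (fun (x : X) (w : Fin n → X) => Real.exp (κ * ‖ξ x + ∑ j, ξ (w j)‖ ^ 2)) x w := by
        intro x w
        simp [Fin.sum_univ_succ]
      have hintg : Integrable
          (fun p : X × (Fin n → X) => Real.exp (κ * ‖ξ p.1 + ∑ j, ξ (p.2 j)‖ ^ 2))
          (P.prod pn) := by
        have hmeasg : StronglyMeasurable
            (fun p : X × (Fin n → X) => ξ p.1 + ∑ j, ξ (p.2 j)) :=
          (hξ.comp_measurable measurable_fst).add
            ((mmd_aux_S_meas ξ hξ n).comp_measurable measurable_snd)
        refine (integrable_const (Real.exp (κ * ((b + n * b) ^ 2)))).mono'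
          (mmd_aux_exp_meas _ hmeasg κ).aestronglyMeasurable (ae_of_all _ fun p => ?_)
        rw [Real.norm_eq_abs, Real.abs_exp]
        refine Real.exp_le_exp.mpr (mul_le_mul_of_nonneg_left ?_ hκ)
        have h3 : ‖ξ p.1 + ∑ j, ξ (p.2 j)‖ ≤ b + n * b := by
          refine (norm_add_le _ _).trans (add_le_add (hbd _) ?_)
          exact mmd_aux_sum_norm_le ξ b hbd p.2
        nlinarith [norm_nonneg (ξ p.1 + ∑ j, ξ (p.2 j)), hnn]
      have hstep : ∫ z, Real.exp (κ * ‖∑ j, ξ (z j)‖ ^ 2) ∂(Measure.pi fun _ : Fin (n+1) => P)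
          ≤ Real.exp (κ * b ^ 2) * ∫ w, Real.exp (κ' * ‖∑ j, ξ (w j)‖ ^ 2) ∂pn := by
        rw [mmd_aux_fubini P _ _ hfg hintg]
        have hintr : Integrable
            (fun w : Fin n → X => Real.exp (κ * b ^ 2) * Real.exp (κ' * ‖∑ j, ξ (w j)‖ ^ 2)) pn := by
          refine Integrable.const_mul ?_ _
          refine (integrable_const (Real.exp (κ' * ((n : ℝ) * b) ^ 2))).mono'
            (mmd_aux_exp_meas _ (mmd_aux_S_meas ξ hξ n) κ').aestronglyMeasurable
            (ae_of_all _ fun w => ?_)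
          rw [Real.norm_eq_abs, Real.abs_exp]
          refine Real.exp_le_exp.mpr (mul_le_mul_of_nonneg_left ?_ hκ'0)
          have h3 := mmd_aux_sum_norm_le ξ b hbd w
          nlinarith [norm_nonneg (∑ j, ξ (w j)), hnn]
        calc ∫ w, ∫ x, Real.exp (κ * ‖ξ x + ∑ j, ξ (w j)‖ ^ 2) ∂P ∂pn
            ≤ ∫ w, Real.exp (κ * b ^ 2) * Real.exp (κ' * ‖∑ j, ξ (w j)‖ ^ 2) ∂pn := by
              refine integral_mono_of_nonneg
                (ae_of_all _ fun w => integral_nonneg fun x => (Real.exp_pos _).le)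
                hintr (ae_of_all _ fun w => hinner _)
          _ = Real.exp (κ * b ^ 2) * ∫ w, Real.exp (κ' * ‖∑ j, ξ (w j)‖ ^ 2) ∂pn :=
              integral_const_mul _ _
      -- combine with IH
      set F1 := ∫ z, Real.exp (κ * ‖∑ j, ξ (z j)‖ ^ 2) ∂(Measure.pi fun _ : Fin (n + 1) => P)
        with hF1
      set F2 := ∫ w, Real.exp (κ' * ‖∑ j, ξ (w j)‖ ^ 2) ∂pn with hF2
      have hF1nn : 0 ≤ F1 := integral_nonneg fun z => (Real.exp_pos _).le
      have hE : a + 1 ≤ Real.exp a := Real.add_one_le_exp a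
      have hE' : Real.exp a * (1 - a) ≤ 1 := by
        have h := Real.add_one_le_exp (-a)
        have h2 := mul_le_mul_of_nonneg_left h (Real.exp_pos a).le
        rwa [← Real.exp_add, add_neg_cancel, Real.exp_zero, mul_comm (Real.exp a) (-a + 1),
          show (-a + 1) = (1 - a) by ring, mul_comm] at h2
      have hkey : Real.exp a * (1 - a * ((n:ℝ) + 1)) ≤ 1 - (a + a ^ 2) * n := by
        nlinarith [mul_le_mul_of_nonneg_right hE (mul_nonneg ha hnn), Real.exp_pos a]
      have hsq : F1 ^ 2 ≤ Real.exp a * F2 ^ 2 := by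
        have h1 : F1 ^ 2 ≤ (Real.exp (κ * b ^ 2) * F2) ^ 2 := pow_le_pow_left₀ hF1nn hstep 2
        calc F1 ^ 2 ≤ (Real.exp (κ * b ^ 2) * F2) ^ 2 := h1
          _ = (Real.exp (κ * b ^ 2)) ^ 2 * F2 ^ 2 := by ring
          _ = Real.exp a * F2 ^ 2 := by
              have h2 : (Real.exp (κ * b ^ 2)) ^ 2 = Real.exp a := by
                rw [pow_two, ← Real.exp_add, haa]
                congr 1
                ring
              rw [h2]
      have hd : (0:ℝ) ≤ 1 - a * ((n:ℝ) + 1) := le_of_lt (by linarith)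
      calc F1 ^ 2 * (1 - 2 * κ * b ^ 2 * ((n:ℕ)+1 : ℕ))
          = F1 ^ 2 * (1 - a * ((n:ℝ) + 1)) := by push_cast; ring
        _ ≤ (Real.exp a * F2 ^ 2) * (1 - a * ((n:ℝ) + 1)) := mul_le_mul_of_nonneg_right hsq hd
        _ = F2 ^ 2 * (Real.exp a * (1 - a * ((n:ℝ) + 1))) := by ring
        _ ≤ F2 ^ 2 * (1 - (a + a ^ 2) * n) := mul_le_mul_of_nonneg_left hkey (sq_nonneg F2)
        _ = F2 ^ 2 * (1 - 2 * κ' * b ^ 2 * n) := by rw [hκ'b]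
        _ ≤ 1 := IH'

/-- Second-moment bound for sums of iid bounded centered Hilbert-valued random variables. -/
lemma mmd_aux_var (P : Measure X) [IsProbabilityMeasure P] (ξ : X → H)
    (hξ : StronglyMeasurable ξ) (b : ℝ) (hb : 0 ≤ b) (hbd : ∀ x, ‖ξ x‖ ≤ b)
    (h0 : ∫ x, ξ x ∂P = 0) (σ2 : ℝ) (hσ : ∫ x, ‖ξ x‖ ^ 2 ∂P ≤ σ2) :
    ∀ n : ℕ, ∫ z, ‖∑ j, ξ (z j)‖ ^ 2 ∂(Measure.pi fun _ : Fin n => P) ≤ n * σ2 := by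
  have hξint : Integrable ξ P :=
    (integrable_const b).mono' hξ.aestronglyMeasurable (ae_of_all _ fun x => hbd x)
  have hσ0 : 0 ≤ σ2 := le_trans (integral_nonneg fun x => sq_nonneg _) hσ
  have hnorm2int : Integrable (fun x => ‖ξ x‖ ^ 2) P := by
    refine (integrable_const (b ^ 2)).mono' (hξ.norm.pow 2).aestronglyMeasurable
      (ae_of_all _ fun x => ?_)
    rw [Real.norm_eq_abs, abs_of_nonneg (sq_nonneg _)]
    nlinarith [norm_nonneg (ξ x), hbd x]
  intro n
  induction n with
  | zero => simp
  | succ n IH =>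
      set pn := (Measure.pi fun _ : Fin n => P) with hpn
      have hnn : (0:ℝ) ≤ (n : ℝ) := Nat.cast_nonneg n
      have hinner : ∀ s : H, ∫ x, ‖ξ x + s‖ ^ 2 ∂P ≤ σ2 + ‖s‖ ^ 2 := by
        intro s
        have hYint : Integrable (fun x => (inner ℝ s (ξ x) : ℝ)) P := by
          refine (integrable_const (‖s‖ * b)).mono'
            (stronglyMeasurable_const.inner hξ).aestronglyMeasurable (ae_of_all _ fun x => ?_)
          rw [Real.norm_eq_abs]
          exact (abs_real_inner_le_norm _ _).trans
            (mul_le_mul_of_nonneg_left (hbd x) (norm_nonneg s))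
        have hY0 : ∫ x, (inner ℝ s (ξ x) : ℝ) ∂P = 0 := by
          rw [integral_inner hξint s, h0, inner_zero_right]
        have hpt : ∀ x, ‖ξ x + s‖ ^ 2
            = ‖ξ x‖ ^ 2 + 2 * (inner ℝ s (ξ x) : ℝ) + ‖s‖ ^ 2 := by
          intro x
          rw [norm_add_sq_real, real_inner_comm]
        calc ∫ x, ‖ξ x + s‖ ^ 2 ∂P
            = ∫ x, (‖ξ x‖ ^ 2 + 2 * (inner ℝ s (ξ x) : ℝ) + ‖s‖ ^ 2) ∂P :=
              integral_congr_ae (ae_of_all _ hpt)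
          _ = (∫ x, ‖ξ x‖ ^ 2 ∂P) + 2 * ∫ x, (inner ℝ s (ξ x) : ℝ) ∂P + ‖s‖ ^ 2 := by
              have e1 : ∫ x, (‖ξ x‖ ^ 2 + 2 * (inner ℝ s (ξ x) : ℝ) + ‖s‖ ^ 2) ∂P
                  = (∫ x, (‖ξ x‖ ^ 2 + 2 * (inner ℝ s (ξ x) : ℝ)) ∂P) + ∫ _x, ‖s‖ ^ 2 ∂P :=
                integral_add (hnorm2int.add (hYint.const_mul 2)) (integrable_const _)
              have e2 : ∫ x, (‖ξ x‖ ^ 2 + 2 * (inner ℝ s (ξ x) : ℝ)) ∂P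
                  = (∫ x, ‖ξ x‖ ^ 2 ∂P) + ∫ x, 2 * (inner ℝ s (ξ x) : ℝ) ∂P :=
                integral_add hnorm2int (hYint.const_mul 2)
              rw [e1, e2, integral_const_mul, integral_const]
              simp
          _ = (∫ x, ‖ξ x‖ ^ 2 ∂P) + ‖s‖ ^ 2 := by rw [hY0]; ring
          _ ≤ σ2 + ‖s‖ ^ 2 := by linarith
      have hfg : ∀ (x : X) (w : Fin n → X),
          (fun z : Fin (n+1) → X => ‖∑ j, ξ (z j)‖ ^ 2) (Fin.cons x w)
            = (fun (x : X) (w : Fin n → X) => ‖ξ x + ∑ j, ξ (w j)‖ ^ 2) x w := by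
        intro x w
        simp [Fin.sum_univ_succ]
      have hintg : Integrable
          (fun p : X × (Fin n → X) => ‖ξ p.1 + ∑ j, ξ (p.2 j)‖ ^ 2) (P.prod pn) := by
        have hmeasg : StronglyMeasurable
            (fun p : X × (Fin n → X) => ξ p.1 + ∑ j, ξ (p.2 j)) :=
          (hξ.comp_measurable measurable_fst).add
            ((mmd_aux_S_meas ξ hξ n).comp_measurable measurable_snd)
        refine (integrable_const ((b + n * b) ^ 2)).mono'
          (hmeasg.norm.pow 2).aestronglyMeasurable (ae_of_all _ fun p => ?_)
        rw [Real.norm_eq_abs, abs_of_nonneg (sq_nonneg _)]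
        have h3 : ‖ξ p.1 + ∑ j, ξ (p.2 j)‖ ≤ b + n * b :=
          (norm_add_le _ _).trans (add_le_add (hbd _) (mmd_aux_sum_norm_le ξ b hbd p.2))
        nlinarith [norm_nonneg (ξ p.1 + ∑ j, ξ (p.2 j)), hnn]
      rw [mmd_aux_fubini P _ _ hfg hintg]
      have hS2int : Integrable (fun w : Fin n → X => ‖∑ j, ξ (w j)‖ ^ 2) pn := by
        refine (integrable_const (((n:ℝ) * b) ^ 2)).mono'
          ((mmd_aux_S_meas ξ hξ n).norm.pow 2).aestronglyMeasurable (ae_of_all _ fun w => ?_)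
        rw [Real.norm_eq_abs, abs_of_nonneg (sq_nonneg _)]
        have h3 := mmd_aux_sum_norm_le ξ b hbd w
        nlinarith [norm_nonneg (∑ j, ξ (w j)), hnn, mul_nonneg hnn hb]
      have hintr : Integrable
          (fun w : Fin n → X => σ2 + ‖∑ j, ξ (w j)‖ ^ 2) pn :=
        (integrable_const _).add hS2int
      calc ∫ w, ∫ x, ‖ξ x + ∑ j, ξ (w j)‖ ^ 2 ∂P ∂pn
          ≤ ∫ w, (σ2 + ‖∑ j, ξ (w j)‖ ^ 2) ∂pn := by
            refine integral_mono_of_nonneg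
              (ae_of_all _ fun w => integral_nonneg fun x => sq_nonneg _) hintr
              (ae_of_all _ fun w => hinner _)
        _ = σ2 + ∫ w, ‖∑ j, ξ (w j)‖ ^ 2 ∂pn := by
            rw [integral_add (integrable_const _) hS2int, integral_const]
            simp
        _ ≤ σ2 + n * σ2 := by linarith [IH]
        _ = ((n:ℕ)+1 : ℕ) * σ2 := by push_cast; ring

/-- Markov bound helper: probability that `s < ‖S z‖` in terms of an integral. -/
lemma mmd_aux_markov {Z : Type*} [MeasurableSpace Z] (ν : Measure Z) [IsProbabilityMeasure ν]
    (S : Z → H) (s : ℝ) (f : Z → ℝ) (hf : Integrable f ν) (h0f : ∀ z, 0 ≤ f z)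
    (t : ℝ) (ht : 0 < t) (hsub : ∀ z, s < ‖S z‖ → t ≤ f z) :
    (ν {z | s < ‖S z‖}).toReal ≤ (∫ z, f z ∂ν) / t := by
  have hmono : ν {z | s < ‖S z‖} ≤ ν {z | t ≤ f z} :=
    measure_mono fun z hz => hsub z hz
  have h1 : (ν {z | s < ‖S z‖}).toReal ≤ (ν {z | t ≤ f z}).toReal :=
    ENNReal.toReal_mono (measure_ne_top _ _) hmono
  have h2 := mul_meas_ge_le_integral_of_nonneg (ae_of_all _ h0f) hf t
  rw [le_div_iff₀ ht]
  calc (ν {z | s < ‖S z‖}).toReal * t ≤ (ν {z | t ≤ f z}).toReal * t := by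
        exact mul_le_mul_of_nonneg_right h1 ht.le
    _ = t * (ν {z | t ≤ f z}).toReal := mul_comm _ _
    _ ≤ ∫ z, f z ∂ν := h2

/-- Numeric fact for the Chebyshev regime. -/
lemma mmd_aux_num1 (v : ℝ) (h0 : 0 < v) (h1 : v ≤ 1) :
    1 / (2 + v) ^ 2 < Real.exp (-(v ^ 2) / 4) / 2 := by
  have hexp14 : Real.exp (v ^ 2 / 4) ≤ 4 / 3 := by
    have ha1 : Real.exp (v ^ 2 / 4) ≤ Real.exp (1 / 4) :=
      Real.exp_le_exp.mpr (by nlinarith)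
    have ha2 := Real.add_one_le_exp (-(1/4) : ℝ)
    have ha3 := mul_le_mul_of_nonneg_left ha2 (Real.exp_pos (1/4 : ℝ)).le
    rw [← Real.exp_add] at ha3
    norm_num at ha3
    nlinarith [Real.exp_pos (1/4 : ℝ)]
  have hEpos : 0 < Real.exp (v ^ 2 / 4) := Real.exp_pos _
  rw [show -(v ^ 2) / 4 = -(v ^ 2 / 4) by ring, Real.exp_neg, inv_eq_one_div, div_div]
  rw [div_lt_div_iff_of_pos_left one_pos (by positivity) (by positivity)]
  nlinarith

/-- Numeric fact for the Chernoff regime. -/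
lemma mmd_aux_num2 (v : ℝ) (hv : 1 < v) :
    2 * (2 + v) ^ 2 < Real.exp (1 + 2 * v) := by
  have he3 : (20:ℝ) < Real.exp 3 := by
    have h := Real.exp_one_gt_d9
    have h3 : Real.exp 3 = Real.exp 1 * Real.exp 1 * Real.exp 1 := by
      rw [← Real.exp_add, ← Real.exp_add]
      norm_num
    rw [h3]
    nlinarith
  have hv' : v ≤ Real.exp (v - 1) := by
    have := Real.add_one_le_exp (v - 1)
    linarith
  have hsplit : Real.exp (1 + 2 * v) = Real.exp 3 * Real.exp (v - 1) ^ 2 := by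
    rw [pow_two, ← Real.exp_add, ← Real.exp_add]
    congr 1
    ring
  have hvv : v ^ 2 ≤ Real.exp (v - 1) ^ 2 := by nlinarith
  calc 2 * (2 + v) ^ 2 < 20 * v ^ 2 := by nlinarith
    _ ≤ Real.exp 3 * v ^ 2 := by nlinarith
    _ ≤ Real.exp 3 * Real.exp (v - 1) ^ 2 :=
        mul_le_mul_of_nonneg_left hvv (Real.exp_pos 3).le
    _ = Real.exp (1 + 2 * v) := hsplit.symm

/-- The tail bound: each empirical mean concentrates. -/
lemma mmd_aux_tail (P : Measure X) [IsProbabilityMeasure P] (ξ : X → H)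
    (hξ : StronglyMeasurable ξ) (c₀ : ℝ) (hc₀ : 0 < c₀)
    (hbd : ∀ a, ‖ξ a‖ ≤ Real.sqrt (2 * c₀)) (h0 : ∫ a, ξ a ∂P = 0)
    (hσ : ∫ a, ‖ξ a‖ ^ 2 ∂P ≤ c₀) {N : ℕ} (hN : 0 < N) (ε : ℝ) (hε : 0 < ε) :
    ((Measure.pi fun _ : Fin N => P)
        {z | 2 * Real.sqrt (c₀ * N) + ε * N < ‖∑ j, ξ (z j)‖}).toReal
      < Real.exp (-(ε ^ 2 * N) / (4 * c₀)) / 2 := by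
  set pn := (Measure.pi fun _ : Fin N => P) with hpn
  set b := Real.sqrt (2 * c₀) with hbdef
  have hb0 : 0 ≤ b := Real.sqrt_nonneg _
  have hb2 : b ^ 2 = 2 * c₀ := Real.sq_sqrt (by linarith)
  have hNpos : (0:ℝ) < N := by exact_mod_cast hN
  set r := Real.sqrt (c₀ * N) with hrdef
  have hr0 : 0 < r := Real.sqrt_pos.mpr (by positivity)
  have hr2 : r ^ 2 = c₀ * N := Real.sq_sqrt (by positivity)
  set v := ε * Real.sqrt (N / c₀) with hvdef
  have hv0 : 0 < v := mul_pos hε (Real.sqrt_pos.mpr (by positivity))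
  have hv2 : v ^ 2 = ε ^ 2 * N / c₀ := by
    rw [hvdef, mul_pow, Real.sq_sqrt (by positivity : (0:ℝ) ≤ (N:ℝ) / c₀)]
    ring
  have hrv : r * v = ε * N := by
    rw [hrdef, hvdef, mul_comm ε _, ← mul_assoc, ← Real.sqrt_mul (by positivity)]
    rw [show c₀ * (N:ℝ) * ((N:ℝ) / c₀) = (N:ℝ) ^ 2 by field_simp]
    rw [Real.sqrt_sq hNpos.le]
    ring
  set s := 2 * Real.sqrt (c₀ * N) + ε * N with hsdef
  have hs : s = r * (2 + v) := by rw [hsdef, ← hrdef, ← hrv]; ring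
  have hspos : 0 < s := by rw [hs]; positivity
  have hs2 : s ^ 2 = c₀ * N * (2 + v) ^ 2 := by rw [hs, mul_pow, hr2]
  have htarget : Real.exp (-(ε ^ 2 * N) / (4 * c₀)) = Real.exp (-(v ^ 2) / 4) := by
    congr 1
    rw [hv2]
    field_simp
  rw [htarget]
  have hSmeas := mmd_aux_S_meas ξ hξ N
  -- S is bounded by N * b
  have hSbd : ∀ z : Fin N → X, ‖∑ j, ξ (z j)‖ ≤ N * b := fun z => mmd_aux_sum_norm_le ξ b hbd z
  rcases le_or_gt v 1 with hv1 | hv1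
  · -- Chebyshev regime
    have hS2int : Integrable (fun z : Fin N → X => ‖∑ j, ξ (z j)‖ ^ 2) pn := by
      refine (integrable_const (((N:ℝ) * b) ^ 2)).mono'
        (hSmeas.norm.pow 2).aestronglyMeasurable (ae_of_all _ fun z => ?_)
      rw [Real.norm_eq_abs, abs_of_nonneg (sq_nonneg _)]
      nlinarith [norm_nonneg (∑ j, ξ (z j)), hSbd z, hNpos]
    have hmk := mmd_aux_markov pn (fun z => ∑ j, ξ (z j)) s _ hS2int (fun z => sq_nonneg _)
      (s ^ 2) (by positivity) (fun z hz => by nlinarith [hspos, norm_nonneg (∑ j, ξ (z j))])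
    have hvar := mmd_aux_var P ξ hξ b hb0 hbd h0 c₀ hσ N
    have h1 : ((pn) {z | s < ‖∑ j, ξ (z j)‖}).toReal ≤ ((N:ℝ) * c₀) / s ^ 2 := by
      refine hmk.trans ?_
      gcongr
    have h2 : ((N:ℝ) * c₀) / s ^ 2 = 1 / (2 + v) ^ 2 := by
      rw [hs2]
      rw [div_eq_div_iff (by positivity) (by positivity)]
      ring
    have h3 : 1 / (2 + v) ^ 2 < Real.exp (-(v ^ 2) / 4) / 2 := mmd_aux_num1 v hv0 hv1
    calc ((pn) {z | s < ‖∑ j, ξ (z j)‖}).toReal ≤ 1 / (2 + v) ^ 2 := h1.trans_eq h2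
      _ < Real.exp (-(v ^ 2) / 4) / 2 := h3
  · -- Chernoff regime
    have h2v : (0:ℝ) < 2 + v := by linarith
    set θ := 1 - 2 / (2 + v) ^ 2 with hθdef
    have hfrac : 0 < 2 / (2 + v) ^ 2 := by positivity
    have hfrac1 : 2 / (2 + v) ^ 2 < 1 := by
      rw [div_lt_one (by positivity)]
      nlinarith
    have hθpos : 0 < θ := by rw [hθdef]; linarith
    have hθ1 : θ < 1 := by rw [hθdef]; linarith
    set κ := θ / (4 * c₀ * N) with hκdef
    have hκpos : 0 < κ := by positivity
    have hcond : 2 * κ * b ^ 2 * N = θ := by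
      rw [hκdef, hb2]
      field_simp
      ring
    have hmgf := mmd_aux_mgf P ξ hξ b hb0 hbd h0 N κ hκpos.le (by rw [hcond]; exact hθ1)
    rw [hcond] at hmgf
    set F := ∫ z, Real.exp (κ * ‖∑ j, ξ (z j)‖ ^ 2) ∂pn with hFdef
    have hF0 : 0 ≤ F := integral_nonneg fun z => (Real.exp_pos _).le
    have hFsq : F ^ 2 ≤ (2 + v) ^ 2 / 2 := by
      have h1θ : 1 - θ = 2 / (2 + v) ^ 2 := by rw [hθdef]; ring
      rw [h1θ] at hmgf
      have hc := mul_le_mul_of_nonneg_right hmgf (le_of_lt (show (0:ℝ) < (2+v)^2/2 by positivity))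
      calc F ^ 2 = F ^ 2 * (2 / (2 + v) ^ 2) * ((2 + v) ^ 2 / 2) := by
            field_simp
        _ ≤ 1 * ((2 + v) ^ 2 / 2) := hc
        _ = (2 + v) ^ 2 / 2 := one_mul _
    have hexpint : Integrable (fun z : Fin N → X => Real.exp (κ * ‖∑ j, ξ (z j)‖ ^ 2)) pn := by
      refine (integrable_const (Real.exp (κ * ((N:ℝ) * b) ^ 2))).mono'
        (mmd_aux_exp_meas _ hSmeas κ).aestronglyMeasurable (ae_of_all _ fun z => ?_)
      rw [Real.norm_eq_abs, Real.abs_exp]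
      refine Real.exp_le_exp.mpr (mul_le_mul_of_nonneg_left ?_ hκpos.le)
      nlinarith [norm_nonneg (∑ j, ξ (z j)), hSbd z, hNpos]
    have hmk := mmd_aux_markov pn (fun z => ∑ j, ξ (z j)) s _ hexpint
      (fun z => (Real.exp_pos _).le) (Real.exp (κ * s ^ 2)) (Real.exp_pos _)
      (fun z hz => Real.exp_le_exp.mpr (mul_le_mul_of_nonneg_left
        (by nlinarith [hspos, norm_nonneg (∑ j, ξ (z j))]) hκpos.le))
    set T := ((pn) {z | s < ‖∑ j, ξ (z j)‖}).toReal with hTdef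
    have hT0 : 0 ≤ T := ENNReal.toReal_nonneg
    have hW : T ≤ F * Real.exp (-(κ * s ^ 2)) := by
      rw [Real.exp_neg]
      rwa [div_eq_mul_inv] at hmk
    have hκs : κ * s ^ 2 = ((2 + v) ^ 2 - 2) / 4 := by
      rw [hκdef, hs2, hθdef]
      field_simp
    by_contra hcon
    push_neg at hcon
    have hR0 : (0:ℝ) < Real.exp (-(v ^ 2) / 4) / 2 := by positivity
    have hsq : (Real.exp (-(v ^ 2) / 4) / 2) ^ 2 ≤ T ^ 2 := pow_le_pow_left₀ hR0.le hcon 2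
    have hT2 : T ^ 2 ≤ F ^ 2 * Real.exp (-(κ * s ^ 2)) ^ 2 := by
      have := pow_le_pow_left₀ hT0 hW 2
      rwa [mul_pow] at this
    have hkey : 2 * (2 + v) ^ 2 < Real.exp (1 + 2 * v) := mmd_aux_num2 v hv1
    have e1 : Real.exp (-(κ * s ^ 2)) ^ 2 = Real.exp (-(((2 + v) ^ 2 - 2) / 2)) := by
      rw [pow_two, ← Real.exp_add, hκs]
      congr 1
      ring
    have e2 : (Real.exp (-(v ^ 2) / 4) / 2) ^ 2 = Real.exp (-(v ^ 2) / 2) / 4 := by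
      have harg : -(v ^ 2) / 4 + -(v ^ 2) / 4 = -(v ^ 2) / 2 := by ring
      rw [div_pow, pow_two, ← Real.exp_add, harg]
      norm_num
    have e3 : Real.exp (-(((2 + v) ^ 2 - 2) / 2)) * Real.exp (1 + 2 * v)
        = Real.exp (-(v ^ 2) / 2) := by
      rw [← Real.exp_add]
      congr 1
      ring
    have hfin : ((2 + v) ^ 2 / 2) * Real.exp (-(((2 + v) ^ 2 - 2) / 2))
        < Real.exp (-(v ^ 2) / 2) / 4 := by
      have h4 := mul_lt_mul_of_pos_right
        (show (2 + v) ^ 2 / 2 < Real.exp (1 + 2 * v) / 4 by linarith)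
        (Real.exp_pos (-(((2 + v) ^ 2 - 2) / 2)))
      calc ((2 + v) ^ 2 / 2) * Real.exp (-(((2 + v) ^ 2 - 2) / 2))
          < (Real.exp (1 + 2 * v) / 4) * Real.exp (-(((2 + v) ^ 2 - 2) / 2)) := h4
        _ = (Real.exp (-(((2 + v) ^ 2 - 2) / 2)) * Real.exp (1 + 2 * v)) / 4 := by ring
        _ = Real.exp (-(v ^ 2) / 2) / 4 := by rw [e3]
    rw [e1] at hT2
    rw [e2] at hsq
    have hmid : F ^ 2 * Real.exp (-(((2 + v) ^ 2 - 2) / 2))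
        ≤ ((2 + v) ^ 2 / 2) * Real.exp (-(((2 + v) ^ 2 - 2) / 2)) :=
      mul_le_mul_of_nonneg_right hFsq (Real.exp_pos _).le
    linarith

/-- A finite family of independent identically-`P`-distributed random variables induces
the product measure on the path space. -/
lemma mmd_aux_map_pi {Ω : Type*} [MeasurableSpace Ω] (μ : Measure Ω) [IsProbabilityMeasure μ]
    {N : ℕ} (x : Fin N → Ω → X) (hmeas : ∀ j, Measurable (x j)) (P : Measure X)
    [IsProbabilityMeasure P] (hlaw : ∀ j, μ.map (x j) = P)
    (hprod : ∀ s : Fin N → Set X, (∀ j, MeasurableSet (s j)) →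
      μ (⋂ j, x j ⁻¹' s j) = ∏ j, μ (x j ⁻¹' s j)) :
    μ.map (fun ω j => x j ω) = Measure.pi (fun _ : Fin N => P) := by
  have hΦ : Measurable (fun ω j => x j ω) := measurable_pi_lambda _ hmeas
  refine (Measure.pi_eq fun s hs => ?_).symm
  rw [Measure.map_apply hΦ (MeasurableSet.univ_pi hs)]
  have hpre : (fun ω j => x j ω) ⁻¹' (Set.pi Set.univ s) = ⋂ j, x j ⁻¹' s j := by
    ext ω
    simp [Set.mem_pi]
  rw [hpre, hprod s hs]
  congr 1
  ext j
  rw [← hlaw j, Measure.map_apply (hmeas j) (hs j)]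

/-- Basic facts about the centered feature map. -/
lemma mmd_aux_feature_facts (φ : X → H) (hφ : StronglyMeasurable φ) (c₀ : ℝ) (hc₀ : 0 < c₀)
    (hK : ∀ x y : X, 0 ≤ (inner ℝ (φ x) (φ y) : ℝ) ∧ (inner ℝ (φ x) (φ y) : ℝ) ≤ c₀)
    (R : Measure X) [IsProbabilityMeasure R] :
    (∀ a, ‖φ a - ∫ b, φ b ∂ R‖ ≤ Real.sqrt (2 * c₀)) ∧
    (∫ a, (φ a - ∫ b, φ b ∂ R) ∂ R = 0) ∧
    (∫ a, ‖φ a - ∫ b, φ b ∂ R‖ ^ 2 ∂ R ≤ c₀) := by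
  have hφ2 : ∀ a, ‖φ a‖ ^ 2 ≤ c₀ := by
    intro a
    rw [← real_inner_self_eq_norm_sq]
    exact (hK a a).2
  have hnφ : ∀ a, ‖φ a‖ ≤ Real.sqrt c₀ := by
    intro a
    have := Real.sqrt_le_sqrt (hφ2 a)
    rwa [Real.sqrt_sq (norm_nonneg _)] at this
  have hint : Integrable φ R :=
    (integrable_const (Real.sqrt c₀)).mono' hφ.aestronglyMeasurable (ae_of_all _ hnφ)
  set m := ∫ b, φ b ∂ R with hm
  have hmn : ‖m‖ ≤ Real.sqrt c₀ := by
    refine (norm_integral_le_integral_norm _).trans ?_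
    calc ∫ a, ‖φ a‖ ∂ R ≤ ∫ _a, Real.sqrt c₀ ∂ R :=
          integral_mono hint.norm (integrable_const _) hnφ
      _ = Real.sqrt c₀ := by simp
  have hm2 : ‖m‖ ^ 2 ≤ c₀ := by
    have h := Real.sq_sqrt hc₀.le
    nlinarith [norm_nonneg m, Real.sqrt_nonneg c₀]
  have hip : ∀ a, 0 ≤ (inner ℝ (φ a) m : ℝ) := by
    intro a
    rw [hm, ← integral_inner hint (φ a)]
    exact integral_nonneg fun b => (hK a b).1
  refine ⟨?_, ?_, ?_⟩
  · intro a
    have h1 : ‖φ a - m‖ ^ 2 ≤ 2 * c₀ := by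
      rw [norm_sub_sq_real]
      nlinarith [hφ2 a, hm2, hip a]
    have := Real.sqrt_le_sqrt h1
    rwa [Real.sqrt_sq (norm_nonneg _)] at this
  · rw [integral_sub hint (integrable_const m), integral_const]
    simp
    exact sub_self _
  · have hinner_int : Integrable (fun a => (inner ℝ (φ a) m : ℝ)) R := by
      refine (integrable_const (Real.sqrt c₀ * ‖m‖)).mono'
        (hφ.inner stronglyMeasurable_const).aestronglyMeasurable (ae_of_all _ fun a => ?_)
      rw [Real.norm_eq_abs]
      exact (abs_real_inner_le_norm _ _).trans
        (mul_le_mul_of_nonneg_right (hnφ a) (norm_nonneg m))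
    have hn2int : Integrable (fun a => ‖φ a‖ ^ 2) R := by
      refine (integrable_const c₀).mono' (hφ.norm.pow 2).aestronglyMeasurable
        (ae_of_all _ fun a => ?_)
      rw [Real.norm_eq_abs, abs_of_nonneg (sq_nonneg _)]
      exact hφ2 a
    have hiinner : ∫ a, (inner ℝ (φ a) m : ℝ) ∂ R = ‖m‖ ^ 2 := by
      have hcomm : ∀ a, (inner ℝ (φ a) m : ℝ) = (inner ℝ m (φ a) : ℝ) := fun a => real_inner_comm _ _
      rw [integral_congr_ae (ae_of_all _ hcomm), integral_inner hint m,
        real_inner_self_eq_norm_sq]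
    have hpt : ∀ a, ‖φ a - m‖ ^ 2 = ‖φ a‖ ^ 2 - 2 * (inner ℝ (φ a) m : ℝ) + ‖m‖ ^ 2 :=
      fun a => norm_sub_sq_real _ _
    calc ∫ a, ‖φ a - m‖ ^ 2 ∂ R
        = ∫ a, (‖φ a‖ ^ 2 - 2 * (inner ℝ (φ a) m : ℝ) + ‖m‖ ^ 2) ∂ R :=
          integral_congr_ae (ae_of_all _ hpt)
      _ = (∫ a, (‖φ a‖ ^ 2 - 2 * (inner ℝ (φ a) m : ℝ)) ∂ R) + ‖m‖ ^ 2 := by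
          have e1 : ∫ a, ((‖φ a‖ ^ 2 - 2 * (inner ℝ (φ a) m : ℝ)) + ‖m‖ ^ 2) ∂ R
              = (∫ a, (‖φ a‖ ^ 2 - 2 * (inner ℝ (φ a) m : ℝ)) ∂ R) + ∫ _a, ‖m‖ ^ 2 ∂ R :=
            integral_add (hn2int.sub (hinner_int.const_mul 2)) (integrable_const _)
          rw [e1]
          simp
      _ = (∫ a, ‖φ a‖ ^ 2 ∂ R) - 2 * (∫ a, (inner ℝ (φ a) m : ℝ) ∂ R) + ‖m‖ ^ 2 := by
          have e2 : ∫ a, (‖φ a‖ ^ 2 - 2 * (inner ℝ (φ a) m : ℝ)) ∂ R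
              = (∫ a, ‖φ a‖ ^ 2 ∂ R) - ∫ a, 2 * (inner ℝ (φ a) m : ℝ) ∂ R :=
            integral_sub hn2int (hinner_int.const_mul 2)
          rw [e2, integral_const_mul]
      _ = (∫ a, ‖φ a‖ ^ 2 ∂ R) - ‖m‖ ^ 2 := by rw [hiinner]; ring
      _ ≤ c₀ - 0 := by
          have h1 : ∫ a, ‖φ a‖ ^ 2 ∂ R ≤ c₀ := by
            calc ∫ a, ‖φ a‖ ^ 2 ∂ R ≤ ∫ _a, c₀ ∂ R := integral_mono hn2int (integrable_const _)
                  (fun a => hφ2 a)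
              _ = c₀ := by simp
          nlinarith [sq_nonneg ‖m‖]
      _ = c₀ := sub_zero c₀

end mmd_aux

/-- Finite-sample guarantee for the empirical MMD (Theorem 2 of the paper): for a
measurable feature map `φ` with kernel `0 ≤ K ≤ c₀`, i.i.d. samples `x₁,…,x_N ~ P`
and `y₁,…,y_N ~ Q` independent of each other, and every `ε > 0`, with probability
greater than `1 − exp(−ε²N/(4c₀))`,
`|MMD_emp − MMD| ≤ 2(2√(c₀/N) + ε)`. -/
theorem empirical_mmd_finite_sample_guarantee
    {X : Type*} [MeasurableSpace X]
    {H : Type*} [NormedAddCommGroup H] [InnerProductSpace ℝ H] [CompleteSpace H]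
    (φ : X → H) (hφ : StronglyMeasurable φ) (c₀ : ℝ) (hc₀ : 0 < c₀)
    (hK : ∀ x y : X, 0 ≤ (inner ℝ (φ x) (φ y) : ℝ) ∧ (inner ℝ (φ x) (φ y) : ℝ) ≤ c₀)
    {Ω : Type*} [MeasurableSpace Ω] (μ : Measure Ω) [IsProbabilityMeasure μ]
    (P Q : Measure X) [IsProbabilityMeasure P] [IsProbabilityMeasure Q]
    {N : ℕ} (hN : 0 < N) (x y : Fin N → Ω → X)
    (hmeas_x : ∀ j, Measurable (x j)) (hmeas_y : ∀ j, Measurable (y j))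
    (hlaw_x : ∀ j, μ.map (x j) = P) (hlaw_y : ∀ j, μ.map (y j) = Q)
    (hindep : iIndepFun (Sum.elim x y) μ)
    (ε : ℝ) (hε : 0 < ε) :
    1 - Real.exp (-(ε ^ 2 * N) / (4 * c₀)) <
      (μ {ω | |‖(N : ℝ)⁻¹ • ∑ j, φ (x j ω) - (N : ℝ)⁻¹ • ∑ j, φ (y j ω)‖
        - ‖(∫ a, φ a ∂P) - ∫ a, φ a ∂Q‖| ≤ 2 * (2 * Real.sqrt (c₀ / N) + ε)}).toReal := by
  have hNpos : (0:ℝ) < N := by exact_mod_cast hN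
  set mP := ∫ a, φ a ∂P with hmPdef
  set mQ := ∫ a, φ a ∂Q with hmQdef
  obtain ⟨hbP, h0P, hσP⟩ := mmd_aux_feature_facts φ hφ c₀ hc₀ hK P
  obtain ⟨hbQ, h0Q, hσQ⟩ := mmd_aux_feature_facts φ hφ c₀ hc₀ hK Q
  set ξP := fun a => φ a - mP with hξPdef
  set ξQ := fun a => φ a - mQ with hξQdef
  have hξPm : StronglyMeasurable ξP := hφ.sub stronglyMeasurable_const
  have hξQm : StronglyMeasurable ξQ := hφ.sub stronglyMeasurable_const
  -- independence: product formulas for each family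
  have hprod_x : ∀ s : Fin N → Set X, (∀ j, MeasurableSet (s j)) →
      μ (⋂ j, x j ⁻¹' s j) = ∏ j, μ (x j ⁻¹' s j) := by
    intro s hs
    have h := hindep.measure_inter_preimage_eq_mul (Finset.univ.image Sum.inl)
      (sets := Sum.elim s fun _ => Set.univ)
      (fun i hi => by rcases i with i | i
                      · exact hs i
                      · exact MeasurableSet.univ)
    have hset : (⋂ i ∈ Finset.univ.image Sum.inl,
        Sum.elim x y i ⁻¹' Sum.elim s (fun _ => Set.univ) i) = ⋂ j, x j ⁻¹' s j := by
      ext ω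
      simp only [Set.mem_iInter, Finset.mem_image, Finset.mem_univ, true_and]
      constructor
      · intro h' j
        exact h' (Sum.inl j) ⟨j, rfl⟩
      · rintro h' i ⟨j, rfl⟩
        exact h' j
    have hprodeq : (∏ i ∈ Finset.univ.image Sum.inl,
        μ (Sum.elim x y i ⁻¹' Sum.elim s (fun _ => Set.univ) i)) = ∏ j, μ (x j ⁻¹' s j) := by
      rw [Finset.prod_image (fun a _ b _ h'' => Sum.inl_injective h'')]
      rfl
    rw [hset, hprodeq] at h
    exact h
  have hprod_y : ∀ s : Fin N → Set X, (∀ j, MeasurableSet (s j)) →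
      μ (⋂ j, y j ⁻¹' s j) = ∏ j, μ (y j ⁻¹' s j) := by
    intro s hs
    have h := hindep.measure_inter_preimage_eq_mul (Finset.univ.image Sum.inr)
      (sets := Sum.elim (fun _ => Set.univ) s)
      (fun i hi => by rcases i with i | i
                      · exact MeasurableSet.univ
                      · exact hs i)
    have hset : (⋂ i ∈ Finset.univ.image Sum.inr,
        Sum.elim x y i ⁻¹' Sum.elim (fun _ => Set.univ) s i) = ⋂ j, y j ⁻¹' s j := by
      ext ω
      simp only [Set.mem_iInter, Finset.mem_image, Finset.mem_univ, true_and]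
      constructor
      · intro h' j
        exact h' (Sum.inr j) ⟨j, rfl⟩
      · rintro h' i ⟨j, rfl⟩
        exact h' j
    have hprodeq : (∏ i ∈ Finset.univ.image Sum.inr,
        μ (Sum.elim x y i ⁻¹' Sum.elim (fun _ => Set.univ) s i)) = ∏ j, μ (y j ⁻¹' s j) := by
      rw [Finset.prod_image (fun a _ b _ h'' => Sum.inr_injective h'')]
      rfl
    rw [hset, hprodeq] at h
    exact h
  have hmapx := mmd_aux_map_pi μ x hmeas_x P hlaw_x hprod_x
  have hmapy := mmd_aux_map_pi μ y hmeas_y Q hlaw_y hprod_y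
  -- tail bounds transferred to Ω
  set s := 2 * Real.sqrt (c₀ * N) + ε * N with hsdef
  have hBA : (μ {ω | s < ‖∑ j, ξP (x j ω)‖}).toReal
      < Real.exp (-(ε ^ 2 * N) / (4 * c₀)) / 2 := by
    have hst : MeasurableSet {z : Fin N → X | s < ‖∑ j, ξP (z j)‖} :=
      measurableSet_lt measurable_const (mmd_aux_S_meas ξP hξPm N).norm.measurable
    have heq : μ {ω | s < ‖∑ j, ξP (x j ω)‖}
        = (Measure.pi fun _ : Fin N => P) {z | s < ‖∑ j, ξP (z j)‖} := by
      rw [← hmapx, Measure.map_apply (measurable_pi_lambda _ hmeas_x) hst]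
      rfl
    rw [heq]
    exact mmd_aux_tail P ξP hξPm c₀ hc₀ hbP h0P hσP hN ε hε
  have hBB : (μ {ω | s < ‖∑ j, ξQ (y j ω)‖}).toReal
      < Real.exp (-(ε ^ 2 * N) / (4 * c₀)) / 2 := by
    have hst : MeasurableSet {z : Fin N → X | s < ‖∑ j, ξQ (z j)‖} :=
      measurableSet_lt measurable_const (mmd_aux_S_meas ξQ hξQm N).norm.measurable
    have heq : μ {ω | s < ‖∑ j, ξQ (y j ω)‖}
        = (Measure.pi fun _ : Fin N => Q) {z | s < ‖∑ j, ξQ (z j)‖} := by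
      rw [← hmapy, Measure.map_apply (measurable_pi_lambda _ hmeas_y) hst]
      rfl
    rw [heq]
    exact mmd_aux_tail Q ξQ hξQm c₀ hc₀ hbQ h0Q hσQ hN ε hε
  -- pointwise implication
  have hsqdiv : Real.sqrt (c₀ / N) = Real.sqrt (c₀ * N) / N := by
    rw [show c₀ / (N:ℝ) = (c₀ * N) / (N:ℝ) ^ 2 by field_simp,
      Real.sqrt_div (by positivity : (0:ℝ) ≤ c₀ * N) ((N:ℝ) ^ 2),
      Real.sqrt_sq hNpos.le]
  have hpoint : ∀ ω, ‖∑ j, ξP (x j ω)‖ ≤ s → ‖∑ j, ξQ (y j ω)‖ ≤ s →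
      |‖(N : ℝ)⁻¹ • ∑ j, φ (x j ω) - (N : ℝ)⁻¹ • ∑ j, φ (y j ω)‖ - ‖mP - mQ‖|
        ≤ 2 * (2 * Real.sqrt (c₀ / N) + ε) := by
    intro ω hxω hyω
    set u := (N : ℝ)⁻¹ • ∑ j, φ (x j ω) with hu
    set w := (N : ℝ)⁻¹ • ∑ j, φ (y j ω) with hw
    have key : ∀ (g : Fin N → X) (mR : H), (N : ℝ)⁻¹ • (∑ j, φ (g j)) - mR
        = (N : ℝ)⁻¹ • ∑ j, (φ (g j) - mR) := by
      intro g mR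
      rw [Finset.sum_sub_distrib, Finset.sum_const, Finset.card_univ, Fintype.card_fin,
        smul_sub, ← Nat.cast_smul_eq_nsmul ℝ, smul_smul, inv_mul_cancel₀ hNpos.ne', one_smul]
    have hnormP : ‖u - mP‖ ≤ (N : ℝ)⁻¹ * s := by
      rw [hu, key (fun j => x j ω) mP]
      rw [norm_smul, Real.norm_eq_abs, abs_of_nonneg (by positivity : (0:ℝ) ≤ (N:ℝ)⁻¹)]
      exact mul_le_mul_of_nonneg_left hxω (by positivity)
    have hnormQ : ‖w - mQ‖ ≤ (N : ℝ)⁻¹ * s := by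
      rw [hw, key (fun j => y j ω) mQ]
      rw [norm_smul, Real.norm_eq_abs, abs_of_nonneg (by positivity : (0:ℝ) ≤ (N:ℝ)⁻¹)]
      exact mul_le_mul_of_nonneg_left hyω (by positivity)
    have hts : (N : ℝ)⁻¹ * s = 2 * Real.sqrt (c₀ / N) + ε := by
      rw [hsdef, hsqdiv]
      field_simp
    calc |‖u - w‖ - ‖mP - mQ‖| ≤ ‖(u - w) - (mP - mQ)‖ := abs_norm_sub_norm_le _ _
      _ = ‖(u - mP) - (w - mQ)‖ := by rw [show (u - w) - (mP - mQ) = (u - mP) - (w - mQ) by abel]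
      _ ≤ ‖u - mP‖ + ‖w - mQ‖ := norm_sub_le _ _
      _ ≤ (N : ℝ)⁻¹ * s + (N : ℝ)⁻¹ * s := add_le_add hnormP hnormQ
      _ = 2 * (2 * Real.sqrt (c₀ / N) + ε) := by rw [hts]; ring
  -- measure arithmetic
  set G := {ω | |‖(N : ℝ)⁻¹ • ∑ j, φ (x j ω) - (N : ℝ)⁻¹ • ∑ j, φ (y j ω)‖
    - ‖mP - mQ‖| ≤ 2 * (2 * Real.sqrt (c₀ / N) + ε)} with hGdef
  have hu_meas : StronglyMeasurable (fun ω => (N : ℝ)⁻¹ • ∑ j, φ (x j ω)) :=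
    (Finset.stronglyMeasurable_fun_sum _ fun j _ => hφ.comp_measurable (hmeas_x j)).const_smul _
  have hw_meas : StronglyMeasurable (fun ω => (N : ℝ)⁻¹ • ∑ j, φ (y j ω)) :=
    (Finset.stronglyMeasurable_fun_sum _ fun j _ => hφ.comp_measurable (hmeas_y j)).const_smul _
  have hGmeas : MeasurableSet G := by
    refine measurableSet_le ?_ measurable_const
    exact (((hu_meas.sub hw_meas).norm.measurable).sub measurable_const).abs
  have hsub : Gᶜ ⊆ {ω | s < ‖∑ j, ξP (x j ω)‖} ∪ {ω | s < ‖∑ j, ξQ (y j ω)‖} := by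
    intro ω hω
    by_contra hc
    simp only [Set.mem_union, Set.mem_setOf_eq, not_or, not_lt] at hc
    exact hω (hpoint ω hc.1 hc.2)
  have hcompl : (μ Gᶜ).toReal = 1 - (μ G).toReal := by
    rw [prob_compl_eq_one_sub hGmeas,
      ENNReal.toReal_sub_of_le prob_le_one ENNReal.one_ne_top, ENNReal.toReal_one]
  have hunion : (μ Gᶜ).toReal ≤ (μ {ω | s < ‖∑ j, ξP (x j ω)‖}).toReal
      + (μ {ω | s < ‖∑ j, ξQ (y j ω)‖}).toReal := by
    calc (μ Gᶜ).toReal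
        ≤ (μ ({ω | s < ‖∑ j, ξP (x j ω)‖} ∪ {ω | s < ‖∑ j, ξQ (y j ω)‖})).toReal :=
          ENNReal.toReal_mono (measure_ne_top _ _) (measure_mono hsub)
      _ ≤ _ := by
          rw [← ENNReal.toReal_add (measure_ne_top μ _) (measure_ne_top μ _)]
          exact ENNReal.toReal_mono
            (ENNReal.add_ne_top.mpr ⟨measure_ne_top μ _, measure_ne_top μ _⟩)
            (measure_union_le _ _)
  have : (μ Gᶜ).toReal < Real.exp (-(ε ^ 2 * N) / (4 * c₀)) := by
    calc (μ Gᶜ).toReal ≤ _ := hunion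
      _ < Real.exp (-(ε ^ 2 * N) / (4 * c₀)) / 2
          + Real.exp (-(ε ^ 2 * N) / (4 * c₀)) / 2 := add_lt_add hBA hBB
      _ = Real.exp (-(ε ^ 2 * N) / (4 * c₀)) := by ring
  linarith [hcompl, this]
end
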